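/- Let N = 100. For the function λ₃(y, N, n) of the three-cluster CTM, if n ≤ 26 then λ₃(y, 100, n) < 0 for all y ≥ 0 (no cascade is possible), while for n = 27 there exists y₊ > 0 with λ₃(y₊, 100, 27) > 0 (a cascade is possible). -/

import Mathlib

/-- `tanh'(y)`. -/
noncomputable def tanhD (y : ℝ) : ℝ := deriv Real.tanh y

/-- The coefficient `c₂(y)` of the quadratic for `u`. -/
noncomputable def c2 (N n y : ℝ) : ℝ := (n + 1 + (n - 1) / (N - 2 * n)) * tanhD y

/-- The coefficient `c₁(y)` of the quadratic for `u`. -/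
noncomputable def c1 (N n y : ℝ) : ℝ :=
  (N - 2 * n - 1) * (N - n - 1) / (N - 2 * n) + (N - 1) * (n - 1) * tanhD y / (N - 2 * n)

/-- The constant coefficient `c₀`. -/
noncomputable def c0 (N n : ℝ) : ℝ := -((N - n - 1) * (N - 1) / (N - 2 * n))

/-- The positive root `u(y)` of `c₂u² + c₁u + c₀ = 0`. -/
noncomputable def uRoot (N n y : ℝ) : ℝ :=
  (-(c1 N n y) + Real.sqrt ((c1 N n y) ^ 2 - 4 * c2 N n y * c0 N n)) / (2 * c2 N n y)

/-- The quantity `c(y)` from the cubic reduction. -/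
noncomputable def cFun (N n y : ℝ) : ℝ :=
  (n - 1) / (N - 2 * n) * tanhD y - (N - n - 1) / ((N - 2 * n) * uRoot N n y)

/-- The quantity `a(y)` from the cubic reduction. -/
noncomputable def aFun (N n y : ℝ) : ℝ :=
  (n - 1) / (N - 2 * n) * iteratedDeriv 3 Real.tanh y / 6

/-- The quantity `b(y)` from the cubic reduction. -/
noncomputable def bFun (N n y : ℝ) : ℝ :=
  (n - 1) / (N - 2 * n) * iteratedDeriv 2 Real.tanh y / 2

/-- The cubic coefficient `λ₃(y, N, n)` at the bifurcation. -/
noncomputable def lam3 (N n y : ℝ) : ℝ :=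
  -(N - 1) / 3 + n * (N - n - 1) / (n - 1) *
    (2 * aFun N n y * cFun N n y - 4 * (bFun N n y) ^ 2) / (cFun N n y) ^ 5



open Real

lemma tanh_eq_fun : Real.tanh = fun x => Real.sinh x / Real.cosh x :=
  funext fun x => Real.tanh_eq_sinh_div_cosh x

lemma hasDerivAt_tanh (x : ℝ) : HasDerivAt Real.tanh (1 - Real.tanh x ^ 2) x := by
  rw [tanh_eq_fun]
  have h := (Real.hasDerivAt_sinh x).div (Real.hasDerivAt_cosh x) (Real.cosh_pos x).ne'
  refine h.congr_deriv ?_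
  have hc := (Real.cosh_pos x).ne'
  have hid : Real.cosh x ^ 2 - Real.sinh x ^ 2 = 1 := Real.cosh_sq_sub_sinh_sq x
  symm
  show 1 - (Real.sinh x / Real.cosh x) ^ 2 = _
  rw [div_pow, one_sub_div (pow_ne_zero 2 hc)]
  ring

lemma deriv_tanh_eq : deriv Real.tanh = fun x => 1 - Real.tanh x ^ 2 :=
  funext fun x => (hasDerivAt_tanh x).deriv

lemma tanhD_eq' (y : ℝ) : tanhD y = 1 - Real.tanh y ^ 2 := (hasDerivAt_tanh y).deriv

lemma iteratedDeriv_two_tanh (y : ℝ) :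
    iteratedDeriv 2 Real.tanh y = -2 * Real.tanh y * (1 - Real.tanh y ^ 2) := by
  rw [iteratedDeriv_succ, iteratedDeriv_one, deriv_tanh_eq]
  have h : HasDerivAt (fun x => 1 - Real.tanh x ^ 2) (-2 * Real.tanh y * (1 - Real.tanh y ^ 2)) y := by
    have := ((hasDerivAt_tanh y).pow 2).const_sub 1
    refine this.congr_deriv ?_
    ring
  exact h.deriv

lemma iteratedDeriv_three_tanh (y : ℝ) :
    iteratedDeriv 3 Real.tanh y = (1 - Real.tanh y ^ 2) * (6 * Real.tanh y ^ 2 - 2) := by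
  rw [iteratedDeriv_succ]
  have hfun : iteratedDeriv 2 Real.tanh = fun x => -2 * Real.tanh x * (1 - Real.tanh x ^ 2) :=
    funext fun x => iteratedDeriv_two_tanh x
  rw [hfun]
  have h : HasDerivAt (fun x => -2 * Real.tanh x * (1 - Real.tanh x ^ 2))
      ((1 - Real.tanh y ^ 2) * (6 * Real.tanh y ^ 2 - 2)) y := by
    have h1 := ((hasDerivAt_tanh y).const_mul (-2)).mul (((hasDerivAt_tanh y).pow 2).const_sub 1)
    refine h1.congr_deriv ?_
    simp only [Pi.pow_apply]
    ring
  exact h.deriv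

lemma tanh_nonneg' {y : ℝ} (hy : 0 ≤ y) : 0 ≤ Real.tanh y := by
  rw [Real.tanh_eq_sinh_div_cosh]
  exact div_nonneg (Real.sinh_nonneg_iff.mpr hy) (Real.cosh_pos y).le

lemma tanh_lt_one' (y : ℝ) : Real.tanh y < 1 := by
  rw [Real.tanh_eq_sinh_div_cosh, div_lt_one (Real.cosh_pos y)]
  nlinarith [Real.cosh_pos y, Real.cosh_sq_sub_sinh_sq y, Real.sinh_lt_cosh y]

lemma tanh_log_three : Real.tanh (Real.log 3) = 4 / 5 := by
  rw [Real.tanh_eq_sinh_div_cosh, Real.sinh_eq, Real.cosh_eq]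
  rw [Real.exp_log (by norm_num), Real.exp_neg, Real.exp_log (by norm_num)]
  norm_num

lemma cneg (n s w : ℝ) (hn : 2 ≤ n) (hn' : n ≤ 27) (hs : 0 < s) (hs1 : s ≤ 1) (hw : 0 < w)
    (hR : 99 * (100 - 2*n)^2 * w^2
        = ((100 - 2*n - 1) * (99 - n) + 99 * (n-1) * s) * (100 - 2*n) * w
          + ((n+1) * (100 - 2*n) + (n-1)) * (99 - n) * s) :
    (n-1)/(100 - 2*n) * s - w < 0 := by
  have hm : (0:ℝ) < 100 - 2*n := by linarith
  have e1 : (0:ℝ) < 100 - 2*n - 1 := by linarith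
  have e2 : (0:ℝ) < 99 - n := by linarith
  have h1 : 0 < ((100 - 2*n - 1) * (99 - n)) * ((100 - 2*n) * w) :=
    mul_pos (mul_pos e1 e2) (mul_pos hm hw)
  have h2 : 0 < ((n+1) * (100 - 2*n) + (n-1)) * (99 - n) * s := by
    have : (0:ℝ) < (n+1) * (100 - 2*n) + (n-1) := by nlinarith
    exact mul_pos (mul_pos this e2) hs
  rw [sub_neg, div_mul_eq_mul_div, div_lt_iff₀ hm]
  by_contra hcon
  push_neg at hcon
  have key : 99*(100 - 2*n)^2*w^2 ≤ 99*((n-1)*s)*((100 - 2*n)*w) := by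
    nlinarith [mul_pos hm hw, hcon]
  nlinarith [hR, h1, h2, key]

lemma bridge (n y : ℝ) (hn : 2 ≤ n) (hn' : n ≤ 27) (hy : 0 ≤ y) :
    ∃ s w : ℝ, s = 1 - Real.tanh y ^ 2 ∧ 0 < s ∧ s ≤ 1 ∧ 0 < w ∧
      99 * (100 - 2*n)^2 * w^2
        = ((100 - 2*n - 1) * (99 - n) + 99 * (n-1) * s) * (100 - 2*n) * w
          + ((n+1) * (100 - 2*n) + (n-1)) * (99 - n) * s ∧
      cFun 100 n y = (n-1)/(100 - 2*n) * s - w ∧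
      aFun 100 n y = (n-1)/(100 - 2*n) * s * (2 - 3*s) / 3 ∧
      (bFun 100 n y)^2 = ((n-1)/(100 - 2*n))^2 * (1-s) * s^2 := by
  set t := Real.tanh y with ht
  have ht0 : 0 ≤ t := tanh_nonneg' hy
  have ht1 : t < 1 := tanh_lt_one' y
  set s : ℝ := 1 - t^2 with hs_def
  have hs : 0 < s := by nlinarith
  have hs1 : s ≤ 1 := by nlinarith
  have hm : (0:ℝ) < 100 - 2*n := by linarith
  have hm' : (100:ℝ) - 2*n ≠ 0 := hm.ne'
  have hp : (0:ℝ) < n - 1 := by linarith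
  have hq : (0:ℝ) < 99 - n := by linarith
  have htD : tanhD y = s := tanhD_eq' y
  -- c2, c1, c0 facts
  have hc2 : c2 100 n y = (n + 1 + (n-1)/(100 - 2*n)) * s := by rw [c2, htD]
  have hc2pos : 0 < c2 100 n y := by
    rw [hc2]
    have : 0 < (n-1)/(100-2*n) := div_pos hp hm
    nlinarith
  have hc1 : c1 100 n y = (100 - 2*n - 1) * (99 - n) / (100 - 2*n) + 99 * (n-1) * s / (100 - 2*n) := by
    rw [c1, htD]; ring_nf
  have hc1pos : 0 < c1 100 n y := by
    rw [hc1]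
    have h1 : 0 < (100 - 2*n - 1) * (99 - n) / (100 - 2*n) := by
      apply div_pos ?_ hm; nlinarith
    have h2 : 0 ≤ 99 * (n-1) * s / (100 - 2*n) := by positivity
    linarith
  have hc0 : c0 100 n = -((99 - n) * 99 / (100 - 2*n)) := by rw [c0]; ring_nf
  have hc0neg : c0 100 n < 0 := by
    rw [hc0]
    have : 0 < (99 - n) * 99 / (100 - 2*n) := by positivity
    linarith
  -- discriminant
  set D : ℝ := (c1 100 n y)^2 - 4 * c2 100 n y * c0 100 n with hD
  have hDpos : 0 < D := by
    have : 0 < -(4 * c2 100 n y * c0 100 n) := by nlinarith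
    nlinarith [sq_nonneg (c1 100 n y)]
  set d : ℝ := Real.sqrt D with hd_def
  have hd2 : d^2 = D := Real.sq_sqrt hDpos.le
  have hd_pos : c1 100 n y < d := by nlinarith [Real.sqrt_nonneg D]
  have hu : uRoot 100 n y = (-(c1 100 n y) + d) / (2 * c2 100 n y) := rfl
  have hupos : 0 < uRoot 100 n y := by
    rw [hu]; apply div_pos (by linarith) (by linarith)
  have hquad : c2 100 n y * (uRoot 100 n y)^2 + c1 100 n y * uRoot 100 n y + c0 100 n = 0 := by
    have hkey : c2 100 n y * (uRoot 100 n y)^2 + c1 100 n y * uRoot 100 n y + c0 100 n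
        = (d^2 - ((c1 100 n y)^2 - 4 * c2 100 n y * c0 100 n)) / (4 * c2 100 n y) := by
      rw [hu]; field_simp; ring
    rw [hkey, hd2, hD]; simp
  -- define w
  have humul : (0:ℝ) < (100 - 2*n) * uRoot 100 n y := mul_pos hm hupos
  refine ⟨s, (99 - n) / ((100 - 2*n) * uRoot 100 n y), rfl, hs, hs1,
    div_pos hq humul, ?_, ?_, ?_, ?_⟩
  · set u := uRoot 100 n y with hu_def
    set w := (99 - n) / ((100 - 2*n) * u) with hw_def
    rw [hc2, hc1, hc0] at hquad
    have hquad' : ((n+1)*(100-2*n)+(n-1))*s*u^2 + ((100-2*n-1)*(99-n)+99*(n-1)*s)*u - 99*(99-n) = 0 := by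
      have := hquad
      have hm'' : 100 - n * 2 ≠ 0 := by linarith
      field_simp at this
      linarith [this]
    have hwu : w * ((100 - 2*n) * u) = (99 - n) := div_mul_cancel₀ _ humul.ne'
    apply mul_right_cancel₀ (pow_ne_zero 2 humul.ne')
    linear_combination (99*(100-2*n)^2*(w*((100-2*n)*u) + (99-n))
        - ((100-2*n-1)*(99-n)+99*(n-1)*s)*(100-2*n)*((100-2*n)*u)) * hwu
      + (-(99-n)*(100-2*n)^2) * hquad'
  · show (n - 1) / (100 - 2 * n) * tanhD y - (100 - n - 1) / ((100 - 2 * n) * uRoot 100 n y) = _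
    rw [htD]; ring_nf
  · show (n - 1) / (100 - 2 * n) * iteratedDeriv 3 Real.tanh y / 6 = _
    rw [iteratedDeriv_three_tanh]
    have h2 : Real.tanh y ^ 2 = 1 - s := by rw [hs_def]; ring
    rw [h2]; ring
  · show ((n - 1) / (100 - 2 * n) * iteratedDeriv 2 Real.tanh y / 2)^2 = _
    rw [iteratedDeriv_two_tanh]
    have h2 : Real.tanh y ^ 2 = 1 - s := by rw [hs_def]; ring
    rw [show ((n - 1) / (100 - 2 * n) * (-2 * Real.tanh y * (1 - Real.tanh y ^ 2)) / 2)^2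
        = ((n-1)/(100-2*n))^2 * (Real.tanh y^2) * ((1 - Real.tanh y^2))^2 by ring, h2]
    ring


lemma keyCase2 (n s w : ℝ) (hn : n = 2) (hs : 0 < s) (hs1 : s ≤ 1) (hw : 0 < w)
    (hR : 99 * (100 - 2 * n) ^ 2 * w ^ 2 = ((100 - 2 * n - 1) * (99 - n) + 99 * (n - 1) * s) * (100 - 2 * n) * w + ((n + 1) * (100 - 2 * n) + (n - 1)) * (99 - n) * s) :
    0 < n * (100 - n - 1) / (n - 1) * (2 * ((n - 1) / (100 - 2 * n) * s * (2 - 3 * s) / 3) * ((n - 1) / (100 - 2 * n) * s - w) - 4 * (((n - 1) / (100 - 2 * n)) ^ 2 * (1 - s) * s ^ 2)) - 33 * ((n - 1) / (100 - 2 * n) * s - w) ^ 5 := by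
  subst hn
  have h1s : (0:ℝ) ≤ 1 - s := by linarith
  have hwlo : ((9215/9504):ℝ) ≤ w := by nlinarith [hR, mul_pos hs hw, hw, hs]
  have hA : (0:ℝ) < (230744488584020000/2910897) + (-11841929441152/29403)*s + (1085769670720/99)*s^2 + (2396288/3)*s^3 + 1056*s^4 := by
    linarith [mul_nonneg (pow_nonneg hs.le 0) (pow_nonneg h1s 4), mul_nonneg (pow_nonneg hs.le 1) (pow_nonneg h1s 3), mul_nonneg (pow_nonneg hs.le 2) (pow_nonneg h1s 2), mul_nonneg (pow_nonneg hs.le 3) (pow_nonneg h1s 1), pow_pos hs 4]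
  have hF : (0:ℝ) < (66447201946929509375/864536409) + (18525801355184635/8732691)*s + (934267636458998/88209)*s^2 + (101060918774/891)*s^3 + (-102917/9)*s^4 + (-11)*s^5 := by
    linarith [mul_nonneg (pow_nonneg hs.le 0) (pow_nonneg h1s 5), mul_nonneg (pow_nonneg hs.le 1) (pow_nonneg h1s 4), mul_nonneg (pow_nonneg hs.le 2) (pow_nonneg h1s 3), mul_nonneg (pow_nonneg hs.le 3) (pow_nonneg h1s 2), mul_nonneg (pow_nonneg hs.le 4) (pow_nonneg h1s 1), pow_pos hs 5]
  have hPAB : (2717908992:ℝ) * (2 * (100 - 2 - 1) / (2 - 1) * (2 * ((2 - 1) / (100 - 2 * 2) * s * (2 - 3 * s) / 3) * ((2 - 1) / (100 - 2 * 2) * s - w) - 4 * (((2 - 1) / (100 - 2 * 2)) ^ 2 * (1 - s) * s ^ 2)) - 33 * ((2 - 1) / (100 - 2 * 2) * s - w) ^ 5) = ((230744488584020000/2910897) + (-11841929441152/29403)*s + (1085769670720/99)*s^2 + (2396288/3)*s^3 + 1056*s^4) * w + ((21935906973941375/8732691)*s + (-3735568136452/88209)*s^2 + (33456954238/297)*s^3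 + (-112132/9)*s^4 + (-11)*s^5) := by
    linear_combination (((782503013375/8732691) + (346815740/88209)*s + (-18818/297)*s^2 + (-4/9)*s^3) + ((2717319200/29403) + (12416/297)*s + 64*s^2)*w + ((9436160/99) + (-4096)*s)*w^2 + (98304)*w^3) * hR
  have hwloA := mul_le_mul_of_nonneg_left hwlo (le_of_lt hA)
  linarith [hPAB, hF, hwloA]

lemma keyCase3 (n s w : ℝ) (hn : n = 3) (hs : 0 < s) (hs1 : s ≤ 1) (hw : 0 < w)
    (hR : 99 * (100 - 2 * n) ^ 2 * w ^ 2 = ((100 - 2 * n - 1) * (99 - n) + 99 * (n - 1) * s) * (100 - 2 * n) * w + ((n + 1) * (100 - 2 * n) + (n - 1)) * (99 - n) * s) :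
    0 < n * (100 - n - 1) / (n - 1) * (2 * ((n - 1) / (100 - 2 * n) * s * (2 - 3 * s) / 3) * ((n - 1) / (100 - 2 * n) * s - w) - 4 * (((n - 1) / (100 - 2 * n)) ^ 2 * (1 - s) * s ^ 2)) - 33 * ((n - 1) / (100 - 2 * n) * s - w) ^ 5 := by
  subst hn
  have h1s : (0:ℝ) ≤ 1 - s := by linarith
  have hwlo : ((496/517):ℝ) ≤ w := by nlinarith [hR, mul_pos hs hw, hw, hs]
  have hA : (0:ℝ) < (8533865988096/1331) + (-25672837824/121)*s + 1395890976*s^2 + 356448*s^3 + 1551*s^4 := by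
    linarith [mul_nonneg (pow_nonneg hs.le 0) (pow_nonneg h1s 4), mul_nonneg (pow_nonneg hs.le 1) (pow_nonneg h1s 3), mul_nonneg (pow_nonneg hs.le 2) (pow_nonneg h1s 2), mul_nonneg (pow_nonneg hs.le 3) (pow_nonneg h1s 1), pow_pos hs 4]
  have hF : (0:ℝ) < (90059521916928/14641) + (98070008832/1331)*s + (158754022272/121)*s^2 + (328028064/11)*s^3 + (-10608)*s^4 + (-33)*s^5 := by
    linarith [mul_nonneg (pow_nonneg hs.le 0) (pow_nonneg h1s 5), mul_nonneg (pow_nonneg hs.le 1) (pow_nonneg h1s 4), mul_nonneg (pow_nonneg hs.le 2) (pow_nonneg h1s 3), mul_nonneg (pow_nonneg hs.le 3) (pow_nonneg h1s 2), mul_nonneg (pow_nonneg hs.le 4) (pow_nonneg h1s 1), pow_pos hs 5]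
  have hPAB : (229345007:ℝ) * (3 * (100 - 3 - 1) / (3 - 1) * (2 * ((3 - 1) / (100 - 2 * 3) * s * (2 - 3 * s) / 3) * ((3 - 1) / (100 - 2 * 3) * s - w) - 4 * (((3 - 1) / (100 - 2 * 3)) ^ 2 * (1 - s) * s ^ 2)) - 33 * ((3 - 1) / (100 - 2 * 3) * s - w) ^ 5) = ((8533865988096/1331) + (-25672837824/121)*s + 1395890976*s^2 + 356448*s^3 + 1551*s^4) * w + ((369000382464/1331)*s + (-3288130176/121)*s^2 + (324266400/11)*s^3 + (-12096)*s^4 + (-33)*s^5) := by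
    linear_combination (((30505984/3993) + (126976/363)*s + (-128/11)*s^2 + (-1/3)*s^3) + ((2890688/363) + (-1880/11)*s + (47/2)*s^2)*w + ((273916/33) + (-2209/3)*s)*w^2 + ((103823/12))*w^3) * hR
  have hwloA := mul_le_mul_of_nonneg_left hwlo (le_of_lt hA)
  linarith [hPAB, hF, hwloA]

lemma keyCase4 (n s w : ℝ) (hn : n = 4) (hs : 0 < s) (hs1 : s ≤ 1) (hw : 0 < w)
    (hR : 99 * (100 - 2 * n) ^ 2 * w ^ 2 = ((100 - 2 * n - 1) * (99 - n) + 99 * (n - 1) * s) * (100 - 2 * n) * w + ((n + 1) * (100 - 2 * n) + (n - 1)) * (99 - n) * s) :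
    0 < n * (100 - n - 1) / (n - 1) * (2 * ((n - 1) / (100 - 2 * n) * s * (2 - 3 * s) / 3) * ((n - 1) / (100 - 2 * n) * s - w) - 4 * (((n - 1) / (100 - 2 * n)) ^ 2 * (1 - s) * s ^ 2)) - 33 * ((n - 1) / (100 - 2 * n) * s - w) ^ 5 := by
  subst hn
  have h1s : (0:ℝ) ≤ 1 - s := by linarith
  have hwlo : ((8645/9108):ℝ) ≤ w := by nlinarith [hR, mul_pos hs hw, hw, hs]
  have hA : (0:ℝ) < (513863555817657500/970299) + (-37587179428880/1089)*s + (15990497543720/99)*s^2 + 87784560*s^3 + 737748*s^4 := by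
    linarith [mul_nonneg (pow_nonneg hs.le 0) (pow_nonneg h1s 4), mul_nonneg (pow_nonneg hs.le 1) (pow_nonneg h1s 3), mul_nonneg (pow_nonneg hs.le 2) (pow_nonneg h1s 2), mul_nonneg (pow_nonneg hs.le 3) (pow_nonneg h1s 1), pow_pos hs 4]
  have hF : (0:ℝ) < (48286417826561403125/96059601) + (-3369324981324575/970299)*s + (482236418750630/3267)*s^2 + (58711098770/11)*s^3 + (-4050135)*s^4 + (-24057)*s^5 := by
    linarith [mul_nonneg (pow_nonneg hs.le 0) (pow_nonneg h1s 5), mul_nonneg (pow_nonneg hs.le 1) (pow_nonneg h1s 4), mul_nonneg (pow_nonneg hs.le 2) (pow_nonneg h1s 3), mul_nonneg (pow_nonneg hs.le 3) (pow_nonneg h1s 2), mul_nonneg (pow_nonneg hs.le 4) (pow_nonneg h1s 1), pow_pos hs 5]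
  have hPAB : (19772445696:ℝ) * (4 * (100 - 4 - 1) / (4 - 1) * (2 * ((4 - 1) / (100 - 2 * 4) * s * (2 - 3 * s) / 3) * ((4 - 1) / (100 - 2 * 4) * s - w) - 4 * (((4 - 1) / (100 - 2 * 4)) ^ 2 * (1 - s) * s ^ 2)) - 33 * ((4 - 1) / (100 - 2 * 4) * s - w) ^ 5) = ((513863555817657500/970299) + (-37587179428880/1089)*s + (15990497543720/99)*s^2 + 87784560*s^3 + 737748*s^4) * w + ((28418397795458125/970299)*s + (-55876083590060/9801)*s^2 + (57794555870/11)*s^3 + (-4750380)*s^4 + (-24057)*s^5) := by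
    linear_combination (((646092936125/970299) + (312084500/9801)*s + (-18050/11)*s^2 + (-108)*s^3) + ((6875714300/9801) + (-3111440/99)*s + 4968*s^2)*w + ((73171280/99) + (-101568)*s)*w^2 + (778688)*w^3) * hR
  have hwloA := mul_le_mul_of_nonneg_left hwlo (le_of_lt hA)
  linarith [hPAB, hF, hwloA]

lemma keyCase5 (n s w : ℝ) (hn : n = 5) (hs : 0 < s) (hs1 : s ≤ 1) (hw : 0 < w)
    (hR : 99 * (100 - 2 * n) ^ 2 * w ^ 2 = ((100 - 2 * n - 1) * (99 - n) + 99 * (n - 1) * s) * (100 - 2 * n) * w + ((n + 1) * (100 - 2 * n) + (n - 1)) * (99 - n) * s) :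
    0 < n * (100 - n - 1) / (n - 1) * (2 * ((n - 1) / (100 - 2 * n) * s * (2 - 3 * s) / 3) * ((n - 1) / (100 - 2 * n) * s - w) - 4 * (((n - 1) / (100 - 2 * n)) ^ 2 * (1 - s) * s ^ 2)) - 33 * ((n - 1) / (100 - 2 * n) * s - w) ^ 5 := by
  subst hn
  have h1s : (0:ℝ) ≤ 1 - s := by linarith
  have hwlo : ((4183/4455):ℝ) ≤ w := by nlinarith [hR, mul_pos hs hw, hw, hs]
  have hA : (0:ℝ) < (1530810606525605/970299) + (-143113387430/891)*s + (20876259310/33)*s^2 + 599720*s^3 + 7920*s^4 := by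
    linarith [mul_nonneg (pow_nonneg hs.le 0) (pow_nonneg h1s 4), mul_nonneg (pow_nonneg hs.le 1) (pow_nonneg h1s 3), mul_nonneg (pow_nonneg hs.le 2) (pow_nonneg h1s 2), mul_nonneg (pow_nonneg hs.le 3) (pow_nonneg h1s 1), pow_pos hs 4]
  have hF : (0:ℝ) < (1280676153419321143/864536409) + (-381328776073510/8732691)*s + (49509628256830/88209)*s^2 + (25603124980/891)*s^3 + (-342160/9)*s^4 + (-352)*s^5 := by
    linarith [mul_nonneg (pow_nonneg hs.le 0) (pow_nonneg h1s 5), mul_nonneg (pow_nonneg hs.le 1) (pow_nonneg h1s 4), mul_nonneg (pow_nonneg hs.le 2) (pow_nonneg h1s 3), mul_nonneg (pow_nonneg hs.le 3) (pow_nonneg h1s 2), mul_nonneg (pow_nonneg hs.le 4) (pow_nonneg h1s 1), pow_pos hs 5]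
  have hPAB : (61509375:ℝ) * (5 * (100 - 5 - 1) / (5 - 1) * (2 * ((5 - 1) / (100 - 2 * 5) * s * (2 - 3 * s) / 3) * ((5 - 1) / (100 - 2 * 5) * s - w) - 4 * (((5 - 1) / (100 - 2 * 5)) ^ 2 * (1 - s) * s ^ 2)) - 33 * ((5 - 1) / (100 - 2 * 5) * s - w) ^ 5) = ((1530810606525605/970299) + (-143113387430/891)*s + (20876259310/33)*s^2 + 599720*s^3 + 7920*s^4) * w + ((935686483089808/8732691)*s + (-2885607359408/88209)*s^2 + (8367133076/297)*s^3 + (-409088/9)*s^4 + (-352)*s^5) := by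
    linear_combination (((73191996487/34930764) + (9240247/88209)*s + (-2209/297)*s^2 + (-8/9)*s^3) + ((87487445/39204) + (-30785/198)*s + 30*s^2)*w + ((104575/44) + (-450)*s)*w^2 + ((10125/4))*w^3) * hR
  have hwloA := mul_le_mul_of_nonneg_left hwlo (le_of_lt hA)
  linarith [hPAB, hF, hwloA]

lemma keyCase6 (n s w : ℝ) (hn : n = 6) (hs : 0 < s) (hs1 : s ≤ 1) (hw : 0 < w)
    (hR : 99 * (100 - 2 * n) ^ 2 * w ^ 2 = ((100 - 2 * n - 1) * (99 - n) + 99 * (n - 1) * s) * (100 - 2 * n) * w + ((n + 1) * (100 - 2 * n) + (n - 1)) * (99 - n) * s) :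
    0 < n * (100 - n - 1) / (n - 1) * (2 * ((n - 1) / (100 - 2 * n) * s * (2 - 3 * s) / 3) * ((n - 1) / (100 - 2 * n) * s - w) - 4 * (((n - 1) / (100 - 2 * n)) ^ 2 * (1 - s) * s ^ 2)) - 33 * ((n - 1) / (100 - 2 * n) * s - w) ^ 5 := by
  subst hn
  have h1s : (0:ℝ) ≤ 1 - s := by linarith
  have hwlo : ((899/968):ℝ) ≤ w := by nlinarith [hR, mul_pos hs hw, hw, hs]
  have hA : (0:ℝ) < (15676532553624/1331) + (-204571147680/121)*s + (65630128272/11)*s^2 + 8853600*s^3 + 165000*s^4 := by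
    linarith [mul_nonneg (pow_nonneg hs.le 0) (pow_nonneg h1s 4), mul_nonneg (pow_nonneg hs.le 1) (pow_nonneg h1s 3), mul_nonneg (pow_nonneg hs.le 2) (pow_nonneg h1s 2), mul_nonneg (pow_nonneg hs.le 3) (pow_nonneg h1s 1), pow_pos hs 4]
  have hF : (0:ℝ) < (1761650345713497/161051) + (-9001431692091/14641)*s + (6828224070042/1331)*s^2 + (42268668330/121)*s^3 + (-7939875/11)*s^4 + (-9375)*s^5 := by
    linarith [mul_nonneg (pow_nonneg hs.le 0) (pow_nonneg h1s 5), mul_nonneg (pow_nonneg hs.le 1) (pow_nonneg h1s 4), mul_nonneg (pow_nonneg hs.le 2) (pow_nonneg h1s 3), mul_nonneg (pow_nonneg hs.le 3) (pow_nonneg h1s 2), mul_nonneg (pow_nonneg hs.le 4) (pow_nonneg h1s 1), pow_pos hs 5]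
  have hPAB : (479756288:ℝ) * (6 * (100 - 6 - 1) / (6 - 1) * (2 * ((6 - 1) / (100 - 2 * 6) * s * (2 - 3 * s) / 3) * ((6 - 1) / (100 - 2 * 6) * s - w) - 4 * (((6 - 1) / (100 - 2 * 6)) ^ 2 * (1 - s) * s ^ 2)) - 33 * ((6 - 1) / (100 - 2 * 6) * s - w) ^ 5) = ((15676532553624/1331) + (-204571147680/121)*s + (65630128272/11)*s^2 + 8853600*s^3 + 165000*s^4) * w + ((13987251028449/14641)*s + (-546961594524/1331)*s^2 + (41273745030/121)*s^3 + (-9625500/11)*s^4 + (-9375)*s^5) := by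
    linear_combination (((726572699/43923) + (3455756/3993)*s + (-9610/121)*s^2 + (-500/33)*s^3) + ((6465608/363) + (-18848/11)*s + 400*s^2)*w + ((57536/3) + (-14080/3)*s)*w^2 + ((61952/3))*w^3) * hR
  have hwloA := mul_le_mul_of_nonneg_left hwlo (le_of_lt hA)
  linarith [hPAB, hF, hwloA]

lemma keyCase7 (n s w : ℝ) (hn : n = 7) (hs : 0 < s) (hs1 : s ≤ 1) (hw : 0 < w)
    (hR : 99 * (100 - 2 * n) ^ 2 * w ^ 2 = ((100 - 2 * n - 1) * (99 - n) + 99 * (n - 1) * s) * (100 - 2 * n) * w + ((n + 1) * (100 - 2 * n) + (n - 1)) * (99 - n) * s) :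
    0 < n * (100 - n - 1) / (n - 1) * (2 * ((n - 1) / (100 - 2 * n) * s * (2 - 3 * s) / 3) * ((n - 1) / (100 - 2 * n) * s - w) - 4 * (((n - 1) / (100 - 2 * n)) ^ 2 * (1 - s) * s ^ 2)) - 33 * ((n - 1) / (100 - 2 * n) * s - w) ^ 5 := by
  subst hn
  have h1s : (0:ℝ) ≤ 1 - s := by linarith
  have hwlo : ((3910/4257):ℝ) ≤ w := by nlinarith [hR, mul_pos hs hw, hw, hs]
  have hA : (0:ℝ) < (10050218069230000/970299) + (-6463115261096/3267)*s + (638575205740/99)*s^2 + 13992372*s^3 + 344817*s^4 := by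
    linarith [mul_nonneg (pow_nonneg hs.le 0) (pow_nonneg h1s 4), mul_nonneg (pow_nonneg hs.le 1) (pow_nonneg h1s 3), mul_nonneg (pow_nonneg hs.le 2) (pow_nonneg h1s 2), mul_nonneg (pow_nonneg hs.le 3) (pow_nonneg h1s 1), pow_pos hs 4]
  have hF : (0:ℝ) < (913868666295100000/96059601) + (-73538699192960/88209)*s + (17524004283928/3267)*s^2 + (5142867068/11)*s^3 + (-1407186)*s^4 + (-24057)*s^5 := by
    linarith [mul_nonneg (pow_nonneg hs.le 0) (pow_nonneg h1s 5), mul_nonneg (pow_nonneg hs.le 1) (pow_nonneg h1s 4), mul_nonneg (pow_nonneg hs.le 2) (pow_nonneg h1s 3), mul_nonneg (pow_nonneg hs.le 3) (pow_nonneg h1s 2), mul_nonneg (pow_nonneg hs.le 4) (pow_nonneg h1s 1), pow_pos hs 5]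
  have hPAB : (441025329:ℝ) * (7 * (100 - 7 - 1) / (7 - 1) * (2 * ((7 - 1) / (100 - 2 * 7) * s * (2 - 3 * s) / 3) * ((7 - 1) / (100 - 2 * 7) * s - w) - 4 * (((7 - 1) / (100 - 2 * 7)) ^ 2 * (1 - s) * s ^ 2)) - 33 * ((7 - 1) / (100 - 2 * 7) * s - w) ^ 5) = ((10050218069230000/970299) + (-6463115261096/3267)*s + (638575205740/99)*s^2 + 13992372*s^3 + 344817*s^4) * w + ((954152030102000/970299)*s + (-5493779112016/9801)*s^2 + (5001497108/11)*s^3 + (-1723896)*s^4 + (-24057)*s^5) := by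
    linear_combination (((14944117750/970299) + (8273560/9801)*s + (-1058/11)*s^2 + (-27)*s^3) + ((164347075/9801) + (-18791/9)*s + (1161/2)*s^2)*w + ((3614795/198) + (-5547)*s)*w^2 + ((79507/4))*w^3) * hR
  have hwloA := mul_le_mul_of_nonneg_left hwlo (le_of_lt hA)
  linarith [hPAB, hF, hwloA]

lemma keyCase8 (n s w : ℝ) (hn : n = 8) (hs : 0 < s) (hs1 : s ≤ 1) (hw : 0 < w)
    (hR : 99 * (100 - 2 * n) ^ 2 * w ^ 2 = ((100 - 2 * n - 1) * (99 - n) + 99 * (n - 1) * s) * (100 - 2 * n) * w + ((n + 1) * (100 - 2 * n) + (n - 1)) * (99 - n) * s) :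
    0 < n * (100 - n - 1) / (n - 1) * (2 * ((n - 1) / (100 - 2 * n) * s * (2 - 3 * s) / 3) * ((n - 1) / (100 - 2 * n) * s - w) - 4 * (((n - 1) / (100 - 2 * n)) ^ 2 * (1 - s) * s ^ 2)) - 33 * ((n - 1) / (100 - 2 * n) * s - w) ^ 5 := by
  subst hn
  have h1s : (0:ℝ) ≤ 1 - s := by linarith
  have hwlo : ((1079/1188):ℝ) ≤ w := by nlinarith [hR, mul_pos hs hw, hw, hs]
  have hA : (0:ℝ) < (5421828424324/2910897) + (-13409827184/29403)*s + (138407048/99)*s^2 + (12688/3)*s^3 + 132*s^4 := by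
    linarith [mul_nonneg (pow_nonneg hs.le 0) (pow_nonneg h1s 4), mul_nonneg (pow_nonneg hs.le 1) (pow_nonneg h1s 3), mul_nonneg (pow_nonneg hs.le 2) (pow_nonneg h1s 2), mul_nonneg (pow_nonneg hs.le 3) (pow_nonneg h1s 1), pow_pos hs 4]
  have hF : (0:ℝ) < (1462538217461399/864536409) + (-1837242755621/8732691)*s + (98948610566/88209)*s^2 + (108734678/891)*s^3 + (-4589/9)*s^4 + (-11)*s^5 := by
    linarith [mul_nonneg (pow_nonneg hs.le 0) (pow_nonneg h1s 5), mul_nonneg (pow_nonneg hs.le 1) (pow_nonneg h1s 4), mul_nonneg (pow_nonneg hs.le 2) (pow_nonneg h1s 3), mul_nonneg (pow_nonneg hs.le 3) (pow_nonneg h1s 2), mul_nonneg (pow_nonneg hs.le 4) (pow_nonneg h1s 1), pow_pos hs 5]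
  have hPAB : (82944:ℝ) * (8 * (100 - 8 - 1) / (8 - 1) * (2 * ((8 - 1) / (100 - 2 * 8) * s * (2 - 3 * s) / 3) * ((8 - 1) / (100 - 2 * 8) * s - w) - 4 * (((8 - 1) / (100 - 2 * 8)) ^ 2 * (1 - s) * s ^ 2)) - 33 * ((8 - 1) / (100 - 2 * 8) * s - w) ^ 5) = ((5421828424324/2910897) + (-13409827184/29403)*s + (138407048/99)*s^2 + (12688/3)*s^3 + 132*s^4) * w + ((1780058127263/8732691)*s + (-13057293028/88209)*s^2 + (35104030/297)*s^3 + (-5668/9)*s^4 + (-11)*s^5) := by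
    linear_combination (((1256216039/427901859) + (729404/4322241)*s + (-338/14553)*s^2 + (-4/441)*s^3) + ((4656964/1440747) + (-1040/2079)*s + (8/49)*s^2)*w + ((17264/4851) + (-64/49)*s)*w^2 + ((192/49))*w^3) * hR
  have hwloA := mul_le_mul_of_nonneg_left hwlo (le_of_lt hA)
  linarith [hPAB, hF, hwloA]

lemma keyCase9 (n s w : ℝ) (hn : n = 9) (hs : 0 < s) (hs1 : s ≤ 1) (hw : 0 < w)
    (hR : 99 * (100 - 2 * n) ^ 2 * w ^ 2 = ((100 - 2 * n - 1) * (99 - n) + 99 * (n - 1) * s) * (100 - 2 * n) * w + ((n + 1) * (100 - 2 * n) + (n - 1)) * (99 - n) * s) :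
    0 < n * (100 - n - 1) / (n - 1) * (2 * ((n - 1) / (100 - 2 * n) * s * (2 - 3 * s) / 3) * ((n - 1) / (100 - 2 * n) * s - w) - 4 * (((n - 1) / (100 - 2 * n)) ^ 2 * (1 - s) * s ^ 2)) - 33 * ((n - 1) / (100 - 2 * n) * s - w) ^ 5 := by
  subst hn
  have h1s : (0:ℝ) ≤ 1 - s := by linarith
  have hwlo : ((405/451):ℝ) ≤ w := by nlinarith [hR, mul_pos hs hw, hw, hs]
  have hA : (0:ℝ) < (3309216676875/1331) + (-92031629490/121)*s + 2216136510*s^2 + 9033120*s^3 + 346368*s^4 := by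
    linarith [mul_nonneg (pow_nonneg hs.le 0) (pow_nonneg h1s 4), mul_nonneg (pow_nonneg hs.le 1) (pow_nonneg h1s 3), mul_nonneg (pow_nonneg hs.le 2) (pow_nonneg h1s 2), mul_nonneg (pow_nonneg hs.le 3) (pow_nonneg h1s 1), pow_pos hs 4]
  have hF : (0:ℝ) < (32688603759375/14641) + (-496561849200/1331)*s + (207039309930/121)*s^2 + (2512040040/11)*s^3 + (-1278720)*s^4 + (-33792)*s^5 := by
    linarith [mul_nonneg (pow_nonneg hs.le 0) (pow_nonneg h1s 5), mul_nonneg (pow_nonneg hs.le 1) (pow_nonneg h1s 4), mul_nonneg (pow_nonneg hs.le 2) (pow_nonneg h1s 3), mul_nonneg (pow_nonneg hs.le 3) (pow_nonneg h1s 2), mul_nonneg (pow_nonneg hs.le 4) (pow_nonneg h1s 1), pow_pos hs 5]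
  have hPAB : (115856201:ℝ) * (9 * (100 - 9 - 1) / (9 - 1) * (2 * ((9 - 1) / (100 - 2 * 9) * s * (2 - 3 * s) / 3) * ((9 - 1) / (100 - 2 * 9) * s - w) - 4 * (((9 - 1) / (100 - 2 * 9)) ^ 2 * (1 - s) * s ^ 2)) - 33 * ((9 - 1) / (100 - 2 * 9) * s - w) ^ 5) = ((3309216676875/1331) + (-92031629490/121)*s + 2216136510*s^2 + 9033120*s^3 + 346368*s^4) * w + ((412531076250/1331)*s + (-33762840120/121)*s^2 + (2422810440/11)*s^3 + (-1589760)*s^4 + (-33792)*s^5) := by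
    linear_combination (((22143375/5324) + (30375/121)*s + (-450/11)*s^2 + (-64/3)*s^3) + ((2241675/484) + (-19065/22)*s + 328*s^2)*w + ((226935/44) + (-6724/3)*s)*w^2 + ((68921/12))*w^3) * hR
  have hwloA := mul_le_mul_of_nonneg_left hwlo (le_of_lt hA)
  linarith [hPAB, hF, hwloA]

lemma keyCase10 (n s w : ℝ) (hn : n = 10) (hs : 0 < s) (hs1 : s ≤ 1) (hw : 0 < w)
    (hR : 99 * (100 - 2 * n) ^ 2 * w ^ 2 = ((100 - 2 * n - 1) * (99 - n) + 99 * (n - 1) * s) * (100 - 2 * n) * w + ((n + 1) * (100 - 2 * n) + (n - 1)) * (99 - n) * s) :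
    0 < n * (100 - n - 1) / (n - 1) * (2 * ((n - 1) / (100 - 2 * n) * s * (2 - 3 * s) / 3) * ((n - 1) / (100 - 2 * n) * s - w) - 4 * (((n - 1) / (100 - 2 * n)) ^ 2 * (1 - s) * s ^ 2)) - 33 * ((n - 1) / (100 - 2 * n) * s - w) ^ 5 := by
  subst hn
  have h1s : (0:ℝ) ≤ 1 - s := by linarith
  have hwlo : ((7031/7920):ℝ) ≤ w := by nlinarith [hR, mul_pos hs hw, hw, hs]
  have hA : (0:ℝ) < (195505229525721680/970299) + (-246897145847360/3267)*s + (20872919475680/99)*s^2 + 1128064320*s^3 + 51963120*s^4 := by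
    linarith [mul_nonneg (pow_nonneg hs.le 0) (pow_nonneg h1s 4), mul_nonneg (pow_nonneg hs.le 1) (pow_nonneg h1s 3), mul_nonneg (pow_nonneg hs.le 2) (pow_nonneg h1s 2), mul_nonneg (pow_nonneg hs.le 3) (pow_nonneg h1s 1), pow_pos hs 4]
  have hF : (0:ℝ) < (17182465859941864151/96059601) + (-37596862221984845/970299)*s + (510177964923170/3267)*s^2 + (277929476790/11)*s^3 + (-184586445)*s^4 + (-5845851)*s^5 := by
    linarith [mul_nonneg (pow_nonneg hs.le 0) (pow_nonneg h1s 5), mul_nonneg (pow_nonneg hs.le 1) (pow_nonneg h1s 4), mul_nonneg (pow_nonneg hs.le 2) (pow_nonneg h1s 3), mul_nonneg (pow_nonneg hs.le 3) (pow_nonneg h1s 2), mul_nonneg (pow_nonneg hs.le 4) (pow_nonneg h1s 1), pow_pos hs 5]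
  have hPAB : (9830400000:ℝ) * (10 * (100 - 10 - 1) / (10 - 1) * (2 * ((10 - 1) / (100 - 2 * 10) * s * (2 - 3 * s) / 3) * ((10 - 1) / (100 - 2 * 10) * s - w) - 4 * (((10 - 1) / (100 - 2 * 10)) ^ 2 * (1 - s) * s ^ 2)) - 33 * ((10 - 1) / (100 - 2 * 10) * s - w) ^ 5) = ((195505229525721680/970299) + (-246897145847360/3267)*s + (20872919475680/99)*s^2 + 1128064320*s^3 + 51963120*s^4) * w + ((27500656494994711/970299)*s + (-303934815649316/9801)*s^2 + (266913615354/11)*s^3 + (-230716836)*s^4 + (-5845851)*s^5) := by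
    linear_combination (((347577210791/970299) + (222770204/9801)*s + (-47526/11)*s^2 + (-2916)*s^3) + ((3954796880/9801) + (-8857280/99)*s + 38880*s^2)*w + ((44998400/99) + (-230400)*s)*w^2 + (512000)*w^3) * hR
  have hwloA := mul_le_mul_of_nonneg_left hwlo (le_of_lt hA)
  linarith [hPAB, hF, hwloA]

lemma keyCase11 (n s w : ℝ) (hn : n = 11) (hs : 0 < s) (hs1 : s ≤ 1) (hw : 0 < w)
    (hR : 99 * (100 - 2 * n) ^ 2 * w ^ 2 = ((100 - 2 * n - 1) * (99 - n) + 99 * (n - 1) * s) * (100 - 2 * n) * w + ((n + 1) * (100 - 2 * n) + (n - 1)) * (99 - n) * s) :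
    0 < n * (100 - n - 1) / (n - 1) * (2 * ((n - 1) / (100 - 2 * n) * s * (2 - 3 * s) / 3) * ((n - 1) / (100 - 2 * n) * s - w) - 4 * (((n - 1) / (100 - 2 * n)) ^ 2 * (1 - s) * s ^ 2)) - 33 * ((n - 1) / (100 - 2 * n) * s - w) ^ 5 := by
  subst hn
  have h1s : (0:ℝ) ≤ 1 - s := by linarith
  have hwlo : ((308/351):ℝ) ≤ w := by nlinarith [hR, mul_pos hs hw, hw, hs]
  have hA : (0:ℝ) < (1286882524928/2187) + (-64821064880/243)*s + (6446367928/9)*s^2 + (14786200/3)*s^3 + 268125*s^4 := by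
    linarith [mul_nonneg (pow_nonneg hs.le 0) (pow_nonneg h1s 4), mul_nonneg (pow_nonneg hs.le 1) (pow_nonneg h1s 3), mul_nonneg (pow_nonneg hs.le 2) (pow_nonneg h1s 2), mul_nonneg (pow_nonneg hs.le 3) (pow_nonneg h1s 1), pow_pos hs 4]
  have hF : (0:ℝ) < (30489216744448/59049) + (-927673267136/6561)*s + (369679021888/729)*s^2 + (7992238760/81)*s^3 + (-8288500/9)*s^4 + (-34375)*s^5 := by
    linarith [mul_nonneg (pow_nonneg hs.le 0) (pow_nonneg h1s 5), mul_nonneg (pow_nonneg hs.le 1) (pow_nonneg h1s 4), mul_nonneg (pow_nonneg hs.le 2) (pow_nonneg h1s 3), mul_nonneg (pow_nonneg hs.le 3) (pow_nonneg h1s 2), mul_nonneg (pow_nonneg hs.le 4) (pow_nonneg h1s 1), pow_pos hs 5]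
  have hPAB : (30074733:ℝ) * (11 * (100 - 11 - 1) / (11 - 1) * (2 * ((11 - 1) / (100 - 2 * 11) * s * (2 - 3 * s) / 3) * ((11 - 1) / (100 - 2 * 11) * s - w) - 4 * (((11 - 1) / (100 - 2 * 11)) ^ 2 * (1 - s) * s ^ 2)) - 33 * ((11 - 1) / (100 - 2 * 11) * s - w) ^ 5) = ((1286882524928/2187) + (-64821064880/243)*s + (6446367928/9)*s^2 + (14786200/3)*s^3 + 268125*s^4) * w + ((608087346944/6561)*s + (-88508975456/729)*s^2 + (2547306520/27)*s^3 + (-10406000/9)*s^4 + (-34375)*s^5) := by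
    linear_combination (((7304528/6561) + (54208/729)*s + (-440/27)*s^2 + (-125/9)*s^3) + ((308308/243) + (-8866/27)*s + (325/2)*s^2)*w + ((13013/9) + (-845)*s)*w^2 + ((6591/4))*w^3) * hR
  have hwloA := mul_le_mul_of_nonneg_left hwlo (le_of_lt hA)
  linarith [hPAB, hF, hwloA]

lemma keyCase12 (n s w : ℝ) (hn : n = 12) (hs : 0 < s) (hs1 : s ≤ 1) (hw : 0 < w)
    (hR : 99 * (100 - 2 * n) ^ 2 * w ^ 2 = ((100 - 2 * n - 1) * (99 - n) + 99 * (n - 1) * s) * (100 - 2 * n) * w + ((n + 1) * (100 - 2 * n) + (n - 1)) * (99 - n) * s) :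
    0 < n * (100 - n - 1) / (n - 1) * (2 * ((n - 1) / (100 - 2 * n) * s * (2 - 3 * s) / 3) * ((n - 1) / (100 - 2 * n) * s - w) - 4 * (((n - 1) / (100 - 2 * n)) ^ 2 * (1 - s) * s ^ 2)) - 33 * ((n - 1) / (100 - 2 * n) * s - w) ^ 5 := by
  subst hn
  have h1s : (0:ℝ) ≤ 1 - s := by linarith
  have hwlo : ((725/836):ℝ) ≤ w := by nlinarith [hR, mul_pos hs hw, hw, hs]
  have hA : (0:ℝ) < (62992214062500/1331) + (-3103044898032/121)*s + (731788852440/11)*s^2 + 579237648*s^3 + 36719628*s^4 := by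
    linarith [mul_nonneg (pow_nonneg hs.le 0) (pow_nonneg h1s 4), mul_nonneg (pow_nonneg hs.le 1) (pow_nonneg h1s 3), mul_nonneg (pow_nonneg hs.le 2) (pow_nonneg h1s 2), mul_nonneg (pow_nonneg hs.le 3) (pow_nonneg h1s 1), pow_pos hs 4]
  have hF : (0:ℝ) < (600912568359375/14641) + (-18561200786325/1331)*s + (5424910548246/121)*s^2 + 10438542402*s^3 + (-122397429)*s^4 + (-5314683)*s^5 := by
    linarith [mul_nonneg (pow_nonneg hs.le 0) (pow_nonneg h1s 5), mul_nonneg (pow_nonneg hs.le 1) (pow_nonneg h1s 4), mul_nonneg (pow_nonneg hs.le 2) (pow_nonneg h1s 3), mul_nonneg (pow_nonneg hs.le 3) (pow_nonneg h1s 2), mul_nonneg (pow_nonneg hs.le 4) (pow_nonneg h1s 1), pow_pos hs 5]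
  have hPAB : (2535525376:ℝ) * (12 * (100 - 12 - 1) / (12 - 1) * (2 * ((12 - 1) / (100 - 2 * 12) * s * (2 - 3 * s) / 3) * ((12 - 1) / (100 - 2 * 12) * s - w) - 4 * (((12 - 1) / (100 - 2 * 12)) ^ 2 * (1 - s) * s ^ 2)) - 33 * ((12 - 1) / (100 - 2 * 12) * s - w) ^ 5) = ((62992214062500/1331) + (-3103044898032/121)*s + (731788852440/11)*s^2 + 579237648*s^3 + 36719628*s^4) * w + ((11040214359375/1331)*s + (-1555969952004/121)*s^2 + 9936213102*s^3 + (-154241604)*s^4 + (-5314683)*s^5) := by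
    linear_combination (((381078125/3993) + (2438900/363)*s + (-1682)*s^2 + (-5324/3)*s^3) + ((39947500/363) + (-361456/11)*s + 18392*s^2)*w + ((4187600/33) + (-254144/3)*s)*w^2 + ((438976/3))*w^3) * hR
  have hwloA := mul_le_mul_of_nonneg_left hwlo (le_of_lt hA)
  linarith [hPAB, hF, hwloA]

lemma keyCase13 (n s w : ℝ) (hn : n = 13) (hs : 0 < s) (hs1 : s ≤ 1) (hw : 0 < w)
    (hR : 99 * (100 - 2 * n) ^ 2 * w ^ 2 = ((100 - 2 * n - 1) * (99 - n) + 99 * (n - 1) * s) * (100 - 2 * n) * w + ((n + 1) * (100 - 2 * n) + (n - 1)) * (99 - n) * s) :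
    0 < n * (100 - n - 1) / (n - 1) * (2 * ((n - 1) / (100 - 2 * n) * s * (2 - 3 * s) / 3) * ((n - 1) / (100 - 2 * n) * s - w) - 4 * (((n - 1) / (100 - 2 * n)) ^ 2 * (1 - s) * s ^ 2)) - 33 * ((n - 1) / (100 - 2 * n) * s - w) ^ 5 := by
  subst hn
  have h1s : (0:ℝ) ≤ 1 - s := by linarith
  have hwlo : ((3139/3663):ℝ) ≤ w := by nlinarith [hR, mul_pos hs hw, hw, hs]
  have hA : (0:ℝ) < (3592253584974517/970299) + (-287592631562/121)*s + (591410437042/99)*s^2 + 64950984*s^3 + 4747248*s^4 := by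
    linarith [mul_nonneg (pow_nonneg hs.le 0) (pow_nonneg h1s 4), mul_nonneg (pow_nonneg hs.le 1) (pow_nonneg h1s 3), mul_nonneg (pow_nonneg hs.le 2) (pow_nonneg h1s 2), mul_nonneg (pow_nonneg hs.le 3) (pow_nonneg h1s 1), pow_pos hs 4]
  have hF : (0:ℝ) < (304759027114459699/96059601) + (-1279392524909626/970299)*s + (12458779611562/3267)*s^2 + (11658359692/11)*s^3 + (-15399504)*s^4 + (-769824)*s^5 := by
    linarith [mul_nonneg (pow_nonneg hs.le 0) (pow_nonneg h1s 5), mul_nonneg (pow_nonneg hs.le 1) (pow_nonneg h1s 4), mul_nonneg (pow_nonneg hs.le 2) (pow_nonneg h1s 3), mul_nonneg (pow_nonneg hs.le 3) (pow_nonneg h1s 2), mul_nonneg (pow_nonneg hs.le 4) (pow_nonneg h1s 1), pow_pos hs 5]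
  have hPAB : (208031871:ℝ) * (13 * (100 - 13 - 1) / (13 - 1) * (2 * ((13 - 1) / (100 - 2 * 13) * s * (2 - 3 * s) / 3) * ((13 - 1) / (100 - 2 * 13) * s - w) - 4 * (((13 - 1) / (100 - 2 * 13)) ^ 2 * (1 - s) * s ^ 2)) - 33 * ((13 - 1) / (100 - 2 * 13) * s - w) ^ 5) = ((3592253584974517/970299) + (-287592631562/121)*s + (591410437042/99)*s^2 + 64950984*s^3 + 4747248*s^4) * w + ((696905175315308/970299)*s + (-12797643918688/9801)*s^2 + (11046104020/11)*s^3 + (-19467648)*s^4 + (-769824)*s^5) := by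
    linear_combination (((30929574619/3881196) + (5804011/9801)*s + (-1849/11)*s^2 + (-216)*s^3) + ((364572877/39204) + (-628445/198)*s + 1998*s^2)*w + ((4297291/396) + (-8214)*s)*w^2 + ((50653/4))*w^3) * hR
  have hwloA := mul_le_mul_of_nonneg_left hwlo (le_of_lt hA)
  linarith [hPAB, hF, hwloA]

lemma keyCase14 (n s w : ℝ) (hn : n = 14) (hs : 0 < s) (hs1 : s ≤ 1) (hw : 0 < w)
    (hR : 99 * (100 - 2 * n) ^ 2 * w ^ 2 = ((100 - 2 * n - 1) * (99 - n) + 99 * (n - 1) * s) * (100 - 2 * n) * w + ((n + 1) * (100 - 2 * n) + (n - 1)) * (99 - n) * s) :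
    0 < n * (100 - n - 1) / (n - 1) * (2 * ((n - 1) / (100 - 2 * n) * s * (2 - 3 * s) / 3) * ((n - 1) / (100 - 2 * n) * s - w) - 4 * (((n - 1) / (100 - 2 * n)) ^ 2 * (1 - s) * s ^ 2)) - 33 * ((n - 1) / (100 - 2 * n) * s - w) ^ 5 := by
  subst hn
  have h1s : (0:ℝ) ≤ 1 - s := by linarith
  have hwlo : ((6035/7128):ℝ) ≤ w := by nlinarith [hR, mul_pos hs hw, hw, hs]
  have hA : (0:ℝ) < (10612045044005000/970299) + (-80954678767840/9801)*s + (60476402480/3)*s^2 + 270751520*s^3 + 22620312*s^4 := by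
    linarith [mul_nonneg (pow_nonneg hs.le 0) (pow_nonneg h1s 4), mul_nonneg (pow_nonneg hs.le 1) (pow_nonneg h1s 3), mul_nonneg (pow_nonneg hs.le 2) (pow_nonneg h1s 2), mul_nonneg (pow_nonneg hs.le 3) (pow_nonneg h1s 1), pow_pos hs 4]
  have hF : (0:ℝ) < (8005461480071271875/864536409) + (-40649472356937425/8732691)*s + (1068986658919070/88209)*s^2 + (3581734621790/891)*s^3 + (-644083505/9)*s^4 + (-4084223)*s^5 := by
    linarith [mul_nonneg (pow_nonneg hs.le 0) (pow_nonneg h1s 5), mul_nonneg (pow_nonneg hs.le 1) (pow_nonneg h1s 4), mul_nonneg (pow_nonneg hs.le 2) (pow_nonneg h1s 3), mul_nonneg (pow_nonneg hs.le 3) (pow_nonneg h1s 2), mul_nonneg (pow_nonneg hs.le 4) (pow_nonneg h1s 1), pow_pos hs 5]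
  have hPAB : (644972544:ℝ) * (14 * (100 - 14 - 1) / (14 - 1) * (2 * ((14 - 1) / (100 - 2 * 14) * s * (2 - 3 * s) / 3) * ((14 - 1) / (100 - 2 * 14) * s - w) - 4 * (((14 - 1) / (100 - 2 * 14)) ^ 2 * (1 - s) * s ^ 2)) - 33 * ((14 - 1) / (100 - 2 * 14) * s - w) ^ 5) = ((10612045044005000/970299) + (-80954678767840/9801)*s + (60476402480/3)*s^2 + 270751520*s^3 + 22620312*s^4) * w + ((20420713438551875/8732691)*s + (-436535583068980/88209)*s^2 + (1125828814630/297)*s^3 + (-816449140/9)*s^4 + (-4084223)*s^5) := by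
    linear_combination (((219802092875/8732691) + (174411500/88209)*s + (-187850/297)*s^2 + (-8788/9)*s^3) + ((291369800/9801) + (-1139680/99)*s + 8112*s^2)*w + ((386240/11) + (-29952)*s)*w^2 + (41472)*w^3) * hR
  have hwloA := mul_le_mul_of_nonneg_left hwlo (le_of_lt hA)
  linarith [hPAB, hF, hwloA]

lemma keyCase15 (n s w : ℝ) (hn : n = 15) (hs : 0 < s) (hs1 : s ≤ 1) (hw : 0 < w)
    (hR : 99 * (100 - 2 * n) ^ 2 * w ^ 2 = ((100 - 2 * n - 1) * (99 - n) + 99 * (n - 1) * s) * (100 - 2 * n) * w + ((n + 1) * (100 - 2 * n) + (n - 1)) * (99 - n) * s) :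
    0 < n * (100 - n - 1) / (n - 1) * (2 * ((n - 1) / (100 - 2 * n) * s * (2 - 3 * s) / 3) * ((n - 1) / (100 - 2 * n) * s - w) - 4 * (((n - 1) / (100 - 2 * n)) ^ 2 * (1 - s) * s ^ 2)) - 33 * ((n - 1) / (100 - 2 * n) * s - w) ^ 5 := by
  subst hn
  have h1s : (0:ℝ) ≤ 1 - s := by linarith
  have hwlo : ((46/55):ℝ) ≤ w := by nlinarith [hR, mul_pos hs hw, hw, hs]
  have hA : (0:ℝ) < (67161840/1331) + (-5393160/121)*s + (1163940/11)*s^2 + 1740*s^3 + 165*s^4 := by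
    linarith [mul_nonneg (pow_nonneg hs.le 0) (pow_nonneg h1s 4), mul_nonneg (pow_nonneg hs.le 1) (pow_nonneg h1s 3), mul_nonneg (pow_nonneg hs.le 2) (pow_nonneg h1s 2), mul_nonneg (pow_nonneg hs.le 3) (pow_nonneg h1s 1), pow_pos hs 4]
  have hF : (0:ℝ) < (617888928/14641) + (-33848640/1331)*s + (7197480/121)*s^2 + (259620/11)*s^3 + (-510)*s^4 + (-33)*s^5 := by
    linarith [mul_nonneg (pow_nonneg hs.le 0) (pow_nonneg h1s 5), mul_nonneg (pow_nonneg hs.le 1) (pow_nonneg h1s 4), mul_nonneg (pow_nonneg hs.le 2) (pow_nonneg h1s 3), mul_nonneg (pow_nonneg hs.le 3) (pow_nonneg h1s 2), mul_nonneg (pow_nonneg hs.le 4) (pow_nonneg h1s 1), pow_pos hs 5]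
  have hPAB : (3125:ℝ) * (15 * (100 - 15 - 1) / (15 - 1) * (2 * ((15 - 1) / (100 - 2 * 15) * s * (2 - 3 * s) / 3) * ((15 - 1) / (100 - 2 * 15) * s - w) - 4 * (((15 - 1) / (100 - 2 * 15)) ^ 2 * (1 - s) * s ^ 2)) - 33 * ((15 - 1) / (100 - 2 * 15) * s - w) ^ 5) = ((67161840/1331) + (-5393160/121)*s + (1163940/11)*s^2 + 1740*s^3 + 165*s^4) * w + ((15768432/1331)*s + (-3510768/121)*s^2 + (243612/11)*s^3 + (-648)*s^4 + (-33)*s^5) := by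
    linear_combination (((24334/195657) + (184/17787)*s + (-2/539)*s^2 + (-1/147)*s^3) + ((2645/17787) + (-5/77)*s + (5/98)*s^2)*w + ((575/3234) + (-25/147)*s)*w^2 + ((125/588))*w^3) * hR
  have hwloA := mul_le_mul_of_nonneg_left hwlo (le_of_lt hA)
  linarith [hPAB, hF, hwloA]

lemma keyCase16 (n s w : ℝ) (hn : n = 16) (hs : 0 < s) (hs1 : s ≤ 1) (hw : 0 < w)
    (hR : 99 * (100 - 2 * n) ^ 2 * w ^ 2 = ((100 - 2 * n - 1) * (99 - n) + 99 * (n - 1) * s) * (100 - 2 * n) * w + ((n + 1) * (100 - 2 * n) + (n - 1)) * (99 - n) * s) :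
    0 < n * (100 - n - 1) / (n - 1) * (2 * ((n - 1) / (100 - 2 * n) * s * (2 - 3 * s) / 3) * ((n - 1) / (100 - 2 * n) * s - w) - 4 * (((n - 1) / (100 - 2 * n)) ^ 2 * (1 - s) * s ^ 2)) - 33 * ((n - 1) / (100 - 2 * n) * s - w) ^ 5 := by
  subst hn
  have h1s : (0:ℝ) ≤ 1 - s := by linarith
  have hwlo : ((5561/6732):ℝ) ≤ w := by nlinarith [hR, mul_pos hs hw, hw, hs]
  have hA : (0:ℝ) < (65031009087093188/970299) + (-20467653661040/297)*s + (15776622099224/99)*s^2 + 3184909200*s^3 + 340807500*s^4 := by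
    linarith [mul_nonneg (pow_nonneg hs.le 0) (pow_nonneg h1s 4), mul_nonneg (pow_nonneg hs.le 1) (pow_nonneg h1s 3), mul_nonneg (pow_nonneg hs.le 2) (pow_nonneg h1s 2), mul_nonneg (pow_nonneg hs.le 3) (pow_nonneg h1s 1), pow_pos hs 4]
  have hF : (0:ℝ) < (5318197669607723801/96059601) + (-38521967432179307/970299)*s + (271329752830622/3267)*s^2 + (435634413370/11)*s^3 + (-1030579875)*s^4 + (-75178125)*s^5 := by
    linarith [mul_nonneg (pow_nonneg hs.le 0) (pow_nonneg h1s 5), mul_nonneg (pow_nonneg hs.le 1) (pow_nonneg h1s 4), mul_nonneg (pow_nonneg hs.le 2) (pow_nonneg h1s 3), mul_nonneg (pow_nonneg hs.le 3) (pow_nonneg h1s 2), mul_nonneg (pow_nonneg hs.le 4) (pow_nonneg h1s 1), pow_pos hs 5]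
  have hPAB : (4361800704:ℝ) * (16 * (100 - 16 - 1) / (16 - 1) * (2 * ((16 - 1) / (100 - 2 * 16) * s * (2 - 3 * s) / 3) * ((16 - 1) / (100 - 2 * 16) * s - w) - 4 * (((16 - 1) / (100 - 2 * 16)) ^ 2 * (1 - s) * s ^ 2)) - 33 * ((16 - 1) / (100 - 2 * 16) * s - w) ^ 5) = ((65031009087093188/970299) + (-20467653661040/297)*s + (15776622099224/99)*s^2 + 3184909200*s^3 + 340807500*s^4) * w + ((16714510895738833/970299)*s + (-476213616416732/9801)*s^2 + (406694413270/11)*s^3 + (-1312105500)*s^4 + (-75178125)*s^5) := by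
    linear_combination (((171972373481/970299) + (153238916/9801)*s + (-68890/11)*s^2 + (-13500)*s^3) + ((2102881028/9801) + (-10407536/99)*s + 91800*s^2)*w + ((25714064/99) + (-277440)*s)*w^2 + (314432)*w^3) * hR
  have hwloA := mul_le_mul_of_nonneg_left hwlo (le_of_lt hA)
  linarith [hPAB, hF, hwloA]

lemma keyCase17 (n s w : ℝ) (hn : n = 17) (hs : 0 < s) (hs1 : s ≤ 1) (hw : 0 < w)
    (hR : 99 * (100 - 2 * n) ^ 2 * w ^ 2 = ((100 - 2 * n - 1) * (99 - n) + 99 * (n - 1) * s) * (100 - 2 * n) * w + ((n + 1) * (100 - 2 * n) + (n - 1)) * (99 - n) * s) :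
    0 < n * (100 - n - 1) / (n - 1) * (2 * ((n - 1) / (100 - 2 * n) * s * (2 - 3 * s) / 3) * ((n - 1) / (100 - 2 * n) * s - w) - 4 * (((n - 1) / (100 - 2 * n)) ^ 2 * (1 - s) * s ^ 2)) - 33 * ((n - 1) / (100 - 2 * n) * s - w) ^ 5 := by
  subst hn
  have h1s : (0:ℝ) ≤ 1 - s := by linarith
  have hwlo : ((2665/3267):ℝ) ≤ w := by nlinarith [hR, mul_pos hs hw, hw, hs]
  have hA : (0:ℝ) < (50441599950625/2910897) + (-607513365806/29403)*s + (4612475810/99)*s^2 + (3374464/3)*s^3 + 135168*s^4 := by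
    linarith [mul_nonneg (pow_nonneg hs.le 0) (pow_nonneg h1s 4), mul_nonneg (pow_nonneg hs.le 1) (pow_nonneg h1s 3), mul_nonneg (pow_nonneg hs.le 2) (pow_nonneg h1s 2), mul_nonneg (pow_nonneg hs.le 3) (pow_nonneg h1s 1), pow_pos hs 4]
  have hF : (0:ℝ) < (134426863868415625/9509900499) + (-1151856301868740/96059601)*s + (21607267714174/970299)*s^2 + (126029924272/9801)*s^3 + (-39632896/99)*s^4 + (-32768)*s^5 := by
    linarith [mul_nonneg (pow_nonneg hs.le 0) (pow_nonneg h1s 5), mul_nonneg (pow_nonneg hs.le 1) (pow_nonneg h1s 4), mul_nonneg (pow_nonneg hs.le 2) (pow_nonneg h1s 3), mul_nonneg (pow_nonneg hs.le 3) (pow_nonneg h1s 2), mul_nonneg (pow_nonneg hs.le 4) (pow_nonneg h1s 1), pow_pos hs 5]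
  have hPAB : (1185921:ℝ) * (17 * (100 - 17 - 1) / (17 - 1) * (2 * ((17 - 1) / (100 - 2 * 17) * s * (2 - 3 * s) / 3) * ((17 - 1) / (100 - 2 * 17) * s - w) - 4 * (((17 - 1) / (100 - 2 * 17)) ^ 2 * (1 - s) * s ^ 2)) - 33 * ((17 - 1) / (100 - 2 * 17) * s - w) ^ 5) = ((50441599950625/2910897) + (-607513365806/29403)*s + (4612475810/99)*s^2 + (3374464/3)*s^3 + 135168*s^4) * w + ((467166818004250/96059601)*s + (-15269476386776/970299)*s^2 + (39012325904/3267)*s^3 + (-50548736/99)*s^4 + (-32768)*s^5) := by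
    linear_combination (((18927429625/384238404) + (4479865/970299)*s + (-6724/3267)*s^2 + (-512/99)*s^3) + ((7102225/117612) + (-19639/594)*s + 32*s^2)*w + ((2665/36) + (-88)*s)*w^2 + ((363/4))*w^3) * hR
  have hwloA := mul_le_mul_of_nonneg_left hwlo (le_of_lt hA)
  linarith [hPAB, hF, hwloA]

lemma keyCase18 (n s w : ℝ) (hn : n = 18) (hs : 0 < s) (hs1 : s ≤ 1) (hw : 0 < w)
    (hR : 99 * (100 - 2 * n) ^ 2 * w ^ 2 = ((100 - 2 * n - 1) * (99 - n) + 99 * (n - 1) * s) * (100 - 2 * n) * w + ((n + 1) * (100 - 2 * n) + (n - 1)) * (99 - n) * s) :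
    0 < n * (100 - n - 1) / (n - 1) * (2 * ((n - 1) / (100 - 2 * n) * s * (2 - 3 * s) / 3) * ((n - 1) / (100 - 2 * n) * s - w) - 4 * (((n - 1) / (100 - 2 * n)) ^ 2 * (1 - s) * s ^ 2)) - 33 * ((n - 1) / (100 - 2 * n) * s - w) ^ 5 := by
  subst hn
  have h1s : (0:ℝ) ≤ 1 - s := by linarith
  have hwlo : ((567/704):ℝ) ≤ w := by nlinarith [hR, mul_pos hs hw, hw, hs]
  have hA : (0:ℝ) < (19844194007232/1331) + (-2486463153408/121)*s + (497479957632/11)*s^2 + 1312402176*s^3 + 176396352*s^4 := by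
    linarith [mul_nonneg (pow_nonneg hs.le 0) (pow_nonneg h1s 4), mul_nonneg (pow_nonneg hs.le 1) (pow_nonneg h1s 3), mul_nonneg (pow_nonneg hs.le 2) (pow_nonneg h1s 2), mul_nonneg (pow_nonneg hs.le 3) (pow_nonneg h1s 1), pow_pos hs 4]
  have hF : (0:ℝ) < (175807156282821/14641) + (-1450916736381/121)*s + (2365876858194/121)*s^2 + (152096636898/11)*s^3 + (-512165511)*s^4 + (-46855281)*s^5 := by
    linarith [mul_nonneg (pow_nonneg hs.le 0) (pow_nonneg h1s 5), mul_nonneg (pow_nonneg hs.le 1) (pow_nonneg h1s 4), mul_nonneg (pow_nonneg hs.le 2) (pow_nonneg h1s 3), mul_nonneg (pow_nonneg hs.le 3) (pow_nonneg h1s 2), mul_nonneg (pow_nonneg hs.le 4) (pow_nonneg h1s 1), pow_pos hs 5]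
  have hPAB : (1073741824:ℝ) * (18 * (100 - 18 - 1) / (18 - 1) * (2 * ((18 - 1) / (100 - 2 * 18) * s * (2 - 3 * s) / 3) * ((18 - 1) / (100 - 2 * 18) * s - w) - 4 * (((18 - 1) / (100 - 2 * 18)) ^ 2 * (1 - s) * s ^ 2)) - 33 * ((18 - 1) / (100 - 2 * 18) * s - w) ^ 5) = ((19844194007232/1331) + (-2486463153408/121)*s + (497479957632/11)*s^2 + 1312402176*s^3 + 176396352*s^4) * w + ((6068425399533/1331)*s + (-2041484641452/121)*s^2 + (140469573870/11)*s^3 + (-654234732)*s^4 + (-46855281)*s^5) := by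
    linear_combination (((60761421/1331) + (551124/121)*s + (-24786/11)*s^2 + (-19652/3)*s^3) + ((6858432/121) + (-34560)*s + 36992*s^2)*w + ((774144/11) + (-278528/3)*s)*w^2 + ((262144/3))*w^3) * hR
  have hwloA := mul_le_mul_of_nonneg_left hwlo (le_of_lt hA)
  linarith [hPAB, hF, hwloA]

lemma keyCase19 (n s w : ℝ) (hn : n = 19) (hs : 0 < s) (hs1 : s ≤ 1) (hw : 0 < w)
    (hR : 99 * (100 - 2 * n) ^ 2 * w ^ 2 = ((100 - 2 * n - 1) * (99 - n) + 99 * (n - 1) * s) * (100 - 2 * n) * w + ((n + 1) * (100 - 2 * n) + (n - 1)) * (99 - n) * s) :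
    0 < n * (100 - n - 1) / (n - 1) * (2 * ((n - 1) / (100 - 2 * n) * s * (2 - 3 * s) / 3) * ((n - 1) / (100 - 2 * n) * s - w) - 4 * (((n - 1) / (100 - 2 * n)) ^ 2 * (1 - s) * s ^ 2)) - 33 * ((n - 1) / (100 - 2 * n) * s - w) ^ 5 := by
  subst hn
  have h1s : (0:ℝ) ≤ 1 - s := by linarith
  have hwlo : ((2440/3069):ℝ) ≤ w := by nlinarith [hR, mul_pos hs hw, hw, hs]
  have hA : (0:ℝ) < (1098805941760000/970299) + (-5879536101280/3267)*s + (382975917040/99)*s^2 + 134388720*s^3 + 20135709*s^4 := by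
    linarith [mul_nonneg (pow_nonneg hs.le 0) (pow_nonneg h1s 4), mul_nonneg (pow_nonneg hs.le 1) (pow_nonneg h1s 3), mul_nonneg (pow_nonneg hs.le 2) (pow_nonneg h1s 2), mul_nonneg (pow_nonneg hs.le 3) (pow_nonneg h1s 1), pow_pos hs 4]
  have hF : (0:ℝ) < (86486661222400000/96059601) + (-1022835284281600/970299)*s + (4853192263360/3267)*s^2 + (14382612240/11)*s^3 + (-57357720)*s^4 + (-5845851)*s^5 := by
    linarith [mul_nonneg (pow_nonneg hs.le 0) (pow_nonneg h1s 5), mul_nonneg (pow_nonneg hs.le 1) (pow_nonneg h1s 4), mul_nonneg (pow_nonneg hs.le 2) (pow_nonneg h1s 3), mul_nonneg (pow_nonneg hs.le 3) (pow_nonneg h1s 2), mul_nonneg (pow_nonneg hs.le 4) (pow_nonneg h1s 1), pow_pos hs 5]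
  have hPAB : (85887453:ℝ) * (19 * (100 - 19 - 1) / (19 - 1) * (2 * ((19 - 1) / (100 - 2 * 19) * s * (2 - 3 * s) / 3) * ((19 - 1) / (100 - 2 * 19) * s - w) - 4 * (((19 - 1) / (100 - 2 * 19)) ^ 2 * (1 - s) * s ^ 2)) - 33 * ((19 - 1) / (100 - 2 * 19) * s - w) ^ 5) = ((1098805941760000/970299) + (-5879536101280/3267)*s + (382975917040/99)*s^2 + 134388720*s^3 + 20135709*s^4) * w + ((365493885440000/970299)*s + (-15584334099520/9801)*s^2 + (13207313040/11)*s^3 + (-73366560)*s^4 + (-5845851)*s^5) := by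
    linear_combination (((3631696000/970299) + (3904000/9801)*s + (-2400/11)*s^2 + (-729)*s^3) + ((46140400/9801) + (-315580/99)*s + (7533/2)*s^2)*w + ((586210/99) + (-8649)*s)*w^2 + ((29791/4))*w^3) * hR
  have hwloA := mul_le_mul_of_nonneg_left hwlo (le_of_lt hA)
  linarith [hPAB, hF, hwloA]

lemma keyCase20 (n s w : ℝ) (hn : n = 20) (hs : 0 < s) (hs1 : s ≤ 1) (hw : 0 < w)
    (hR : 99 * (100 - 2 * n) ^ 2 * w ^ 2 = ((100 - 2 * n - 1) * (99 - n) + 99 * (n - 1) * s) * (100 - 2 * n) * w + ((n + 1) * (100 - 2 * n) + (n - 1)) * (99 - n) * s) :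
    0 < n * (100 - n - 1) / (n - 1) * (2 * ((n - 1) / (100 - 2 * n) * s * (2 - 3 * s) / 3) * ((n - 1) / (100 - 2 * n) * s - w) - 4 * (((n - 1) / (100 - 2 * n)) ^ 2 * (1 - s) * s ^ 2)) - 33 * ((n - 1) / (100 - 2 * n) * s - w) ^ 5 := by
  subst hn
  have h1s : (0:ℝ) ≤ 1 - s := by linarith
  have hwlo : ((4661/5940):ℝ) ≤ w := by nlinarith [hR, mul_pos hs hw, hw, hs]
  have hA : (0:ℝ) < (9439443849124820/2910897) + (-174363103411120/29403)*s + (112109054840/9)*s^2 + (1549152080/3)*s^3 + 86011860*s^4 := by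
    linarith [mul_nonneg (pow_nonneg hs.le 0) (pow_nonneg h1s 4), mul_nonneg (pow_nonneg hs.le 1) (pow_nonneg h1s 3), mul_nonneg (pow_nonneg hs.le 2) (pow_nonneg h1s 2), mul_nonneg (pow_nonneg hs.le 3) (pow_nonneg h1s 1), pow_pos hs 4]
  have hF : (0:ℝ) < (2199862389038539301/864536409) + (-30403924060952495/8732691)*s + (365525788294610/88209)*s^2 + (4140827927810/891)*s^3 + (-2164734695/9)*s^4 + (-27237089)*s^5 := by
    linarith [mul_nonneg (pow_nonneg hs.le 0) (pow_nonneg h1s 5), mul_nonneg (pow_nonneg hs.le 1) (pow_nonneg h1s 4), mul_nonneg (pow_nonneg hs.le 2) (pow_nonneg h1s 3), mul_nonneg (pow_nonneg hs.le 3) (pow_nonneg h1s 2), mul_nonneg (pow_nonneg hs.le 4) (pow_nonneg h1s 1), pow_pos hs 5]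
  have hPAB : (259200000:ℝ) * (20 * (100 - 20 - 1) / (20 - 1) * (2 * ((20 - 1) / (100 - 2 * 20) * s * (2 - 3 * s) / 3) * ((20 - 1) / (100 - 2 * 20) * s - w) - 4 * (((20 - 1) / (100 - 2 * 20)) ^ 2 * (1 - s) * s ^ 2)) - 33 * ((20 - 1) / (100 - 2 * 20) * s - w) ^ 5) = ((9439443849124820/2910897) + (-174363103411120/29403)*s + (112109054840/9)*s^2 + (1549152080/3)*s^3 + 86011860*s^4) * w + ((10231397189009021/8732691)*s + (-496665714310636/88209)*s^2 + (1259932678522/297)*s^3 + (-2772160876/9)*s^4 + (-27237089)*s^5) := by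
    linear_combination (((101259856781/8732691) + (116357204/88209)*s + (-237158/297)*s^2 + (-27436/9)*s^3) + ((434498420/29403) + (-3292720/297)*s + 14440*s^2)*w + ((1864400/99) + (-30400)*s)*w^2 + (24000)*w^3) * hR
  have hwloA := mul_le_mul_of_nonneg_left hwlo (le_of_lt hA)
  linarith [hPAB, hF, hwloA]

lemma keyCase21 (n s w : ℝ) (hn : n = 21) (hs : 0 < s) (hs1 : s ≤ 1) (hw : 0 < w)
    (hR : 99 * (100 - 2 * n) ^ 2 * w ^ 2 = ((100 - 2 * n - 1) * (99 - n) + 99 * (n - 1) * s) * (100 - 2 * n) * w + ((n + 1) * (100 - 2 * n) + (n - 1)) * (99 - n) * s) :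
    0 < n * (100 - n - 1) / (n - 1) * (2 * ((n - 1) / (100 - 2 * n) * s * (2 - 3 * s) / 3) * ((n - 1) / (100 - 2 * n) * s - w) - 4 * (((n - 1) / (100 - 2 * n)) ^ 2 * (1 - s) * s ^ 2)) - 33 * ((n - 1) / (100 - 2 * n) * s - w) ^ 5 := by
  subst hn
  have h1s : (0:ℝ) ≤ 1 - s := by linarith
  have hwlo : ((247/319):ℝ) ≤ w := by nlinarith [hR, mul_pos hs hw, hw, hs]
  have hA : (0:ℝ) < (323822533047/1331) + (-61851913110/121)*s + (11546906046/11)*s^2 + 51799800*s^3 + 9570000*s^4 := by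
    linarith [mul_nonneg (pow_nonneg hs.le 0) (pow_nonneg h1s 4), mul_nonneg (pow_nonneg hs.le 1) (pow_nonneg h1s 3), mul_nonneg (pow_nonneg hs.le 2) (pow_nonneg h1s 2), mul_nonneg (pow_nonneg hs.le 3) (pow_nonneg h1s 1), pow_pos hs 4]
  have hF : (0:ℝ) < (2758074678021/14641) + (-399864539178/1331)*s + (35303011146/121)*s^2 + (4750182060/11)*s^3 + (-26286000)*s^4 + (-3300000)*s^5 := by
    linarith [mul_nonneg (pow_nonneg hs.le 0) (pow_nonneg h1s 5), mul_nonneg (pow_nonneg hs.le 1) (pow_nonneg h1s 4), mul_nonneg (pow_nonneg hs.le 2) (pow_nonneg h1s 3), mul_nonneg (pow_nonneg hs.le 3) (pow_nonneg h1s 2), mul_nonneg (pow_nonneg hs.le 4) (pow_nonneg h1s 1), pow_pos hs 5]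
  have hPAB : (20511149:ℝ) * (21 * (100 - 21 - 1) / (21 - 1) * (2 * ((21 - 1) / (100 - 2 * 21) * s * (2 - 3 * s) / 3) * ((21 - 1) / (100 - 2 * 21) * s - w) - 4 * (((21 - 1) / (100 - 2 * 21)) ^ 2 * (1 - s) * s ^ 2)) - 33 * ((21 - 1) / (100 - 2 * 21) * s - w) ^ 5) = ((323822533047/1331) + (-61851913110/121)*s + (11546906046/11)*s^2 + 51799800*s^3 + 9570000*s^4) * w + ((126943134552/1331)*s + (-63044774832/121)*s^2 + (4308990660/11)*s^3 + (-33696000)*s^4 + (-3300000)*s^5) := by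
    linear_combination (((15069223/15972) + (41743/363)*s + (-845/11)*s^2 + (-1000/3)*s^3) + ((1769261/1452) + (-22243/22)*s + 1450*s^2)*w + ((207727/132) + (-8410/3)*s)*w^2 + ((24389/12))*w^3) * hR
  have hwloA := mul_le_mul_of_nonneg_left hwlo (le_of_lt hA)
  linarith [hPAB, hF, hwloA]

lemma keyCase22 (n s w : ℝ) (hn : n = 22) (hs : 0 < s) (hs1 : s ≤ 1) (hw : 0 < w)
    (hR : 99 * (100 - 2 * n) ^ 2 * w ^ 2 = ((100 - 2 * n - 1) * (99 - n) + 99 * (n - 1) * s) * (100 - 2 * n) * w + ((n + 1) * (100 - 2 * n) + (n - 1)) * (99 - n) * s) :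
    0 < n * (100 - n - 1) / (n - 1) * (2 * ((n - 1) / (100 - 2 * n) * s * (2 - 3 * s) / 3) * ((n - 1) / (100 - 2 * n) * s - w) - 4 * (((n - 1) / (100 - 2 * n)) ^ 2 * (1 - s) * s ^ 2)) - 33 * ((n - 1) / (100 - 2 * n) * s - w) ^ 5 := by
  subst hn
  have h1s : (0:ℝ) ≤ 1 - s := by linarith
  have hwlo : ((55/72):ℝ) ≤ w := by nlinarith [hR, mul_pos hs hw, hw, hs]
  have hA : (0:ℝ) < (805255000/729) + (-23971552/9)*s + (48138640/9)*s^2 + 313632*s^3 + 64152*s^4 := by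
    linarith [mul_nonneg (pow_nonneg hs.le 0) (pow_nonneg h1s 4), mul_nonneg (pow_nonneg hs.le 1) (pow_nonneg h1s 3), mul_nonneg (pow_nonneg hs.le 2) (pow_nonneg h1s 2), mul_nonneg (pow_nonneg hs.le 3) (pow_nonneg h1s 1), pow_pos hs 4]
  have hF : (0:ℝ) < (5536128125/6561) + (-1141006405/729)*s + (31687238/27)*s^2 + 2424598*s^3 + (-173151)*s^4 + (-24057)*s^5 := by
    linarith [mul_nonneg (pow_nonneg hs.le 0) (pow_nonneg h1s 5), mul_nonneg (pow_nonneg hs.le 1) (pow_nonneg h1s 4), mul_nonneg (pow_nonneg hs.le 2) (pow_nonneg h1s 3), mul_nonneg (pow_nonneg hs.le 3) (pow_nonneg h1s 2), mul_nonneg (pow_nonneg hs.le 4) (pow_nonneg h1s 1), pow_pos hs 5]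
  have hPAB : (98304:ℝ) * (22 * (100 - 22 - 1) / (22 - 1) * (2 * ((22 - 1) / (100 - 2 * 22) * s * (2 - 3 * s) / 3) * ((22 - 1) / (100 - 2 * 22) * s - w) - 4 * (((22 - 1) / (100 - 2 * 22)) ^ 2 * (1 - s) * s ^ 2)) - 33 * ((22 - 1) / (100 - 2 * 22) * s - w) ^ 5) = ((805255000/729) + (-23971552/9)*s + (48138640/9)*s^2 + 313632*s^3 + 64152*s^4) * w + ((342233375/729)*s + (-235891436/81)*s^2 + 2185018*s^3 + (-222156)*s^4 + (-24057)*s^5) := by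
    linear_combination (((166375/35721) + (2420/3969)*s + (-22/49)*s^2 + (-108/49)*s^3) + ((24200/3969) + (-352/63)*s + (432/49)*s^2)*w + ((3520/441) + (-768/49)*s)*w^2 + ((512/49))*w^3) * hR
  have hwloA := mul_le_mul_of_nonneg_left hwlo (le_of_lt hA)
  linarith [hPAB, hF, hwloA]

lemma keyCase23 (n s w : ℝ) (hn : n = 23) (hs : 0 < s) (hs1 : s ≤ 1) (hw : 0 < w)
    (hR : 99 * (100 - 2 * n) ^ 2 * w ^ 2 = ((100 - 2 * n - 1) * (99 - n) + 99 * (n - 1) * s) * (100 - 2 * n) * w + ((n + 1) * (100 - 2 * n) + (n - 1)) * (99 - n) * s) :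
    0 < n * (100 - n - 1) / (n - 1) * (2 * ((n - 1) / (100 - 2 * n) * s * (2 - 3 * s) / 3) * ((n - 1) / (100 - 2 * n) * s - w) - 4 * (((n - 1) / (100 - 2 * n)) ^ 2 * (1 - s) * s ^ 2)) - 33 * ((n - 1) / (100 - 2 * n) * s - w) ^ 5 := by
  subst hn
  have h1s : (0:ℝ) ≤ 1 - s := by linarith
  have hwlo : ((2014/2673):ℝ) ≤ w := by nlinarith [hR, mul_pos hs hw, hw, hs]
  have hA : (0:ℝ) < (16452725990416/323433) + (-459559323656/3267)*s + (3039109052/11)*s^2 + 19228836*s^3 + 4348377*s^4 := by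
    linarith [mul_nonneg (pow_nonneg hs.le 0) (pow_nonneg h1s 4), mul_nonneg (pow_nonneg hs.le 1) (pow_nonneg h1s 3), mul_nonneg (pow_nonneg hs.le 2) (pow_nonneg h1s 2), mul_nonneg (pow_nonneg hs.le 3) (pow_nonneg h1s 1), pow_pos hs 4]
  have hF : (0:ℝ) < (33135790144697824/864536409) + (-720979903735936/8732691)*s + (3816276032776/88209)*s^2 + (11175125348/81)*s^3 + (-103836634/9)*s^4 + (-1771561)*s^5 := by
    linarith [mul_nonneg (pow_nonneg hs.le 0) (pow_nonneg h1s 5), mul_nonneg (pow_nonneg hs.le 1) (pow_nonneg h1s 4), mul_nonneg (pow_nonneg hs.le 2) (pow_nonneg h1s 3), mul_nonneg (pow_nonneg hs.le 3) (pow_nonneg h1s 2), mul_nonneg (pow_nonneg hs.le 4) (pow_nonneg h1s 1), pow_pos hs 5]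
  have hPAB : (4782969:ℝ) * (23 * (100 - 23 - 1) / (23 - 1) * (2 * ((23 - 1) / (100 - 2 * 23) * s * (2 - 3 * s) / 3) * ((23 - 1) / (100 - 2 * 23) * s - w) - 4 * (((23 - 1) / (100 - 2 * 23)) ^ 2 * (1 - s) * s ^ 2)) - 33 * ((23 - 1) / (100 - 2 * 23) * s - w) ^ 5) = ((16452725990416/323433) + (-459559323656/3267)*s + (3039109052/11)*s^2 + 19228836*s^3 + 4348377*s^4) * w + ((204572574107248/8732691)*s + (-14546020859408/88209)*s^2 + (3333861220/27)*s^3 + (-133323608/9)*s^4 + (-1771561)*s^5) := by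
    linear_combination (((2042294686/8732691) + (2908216/88209)*s + (-722/27)*s^2 + (-1331/9)*s^3) + ((1014049/3267) + (-10355/33)*s + (1089/2)*s^2)*w + ((9063/22) + (-891)*s)*w^2 + ((2187/4))*w^3) * hR
  have hwloA := mul_le_mul_of_nonneg_left hwlo (le_of_lt hA)
  linarith [hPAB, hF, hwloA]

lemma keyCase24 (n s w : ℝ) (hn : n = 24) (hs : 0 < s) (hs1 : s ≤ 1) (hw : 0 < w)
    (hR : 99 * (100 - 2 * n) ^ 2 * w ^ 2 = ((100 - 2 * n - 1) * (99 - n) + 99 * (n - 1) * s) * (100 - 2 * n) * w + ((n + 1) * (100 - 2 * n) + (n - 1)) * (99 - n) * s) :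
    0 < n * (100 - n - 1) / (n - 1) * (2 * ((n - 1) / (100 - 2 * n) * s * (2 - 3 * s) / 3) * ((n - 1) / (100 - 2 * n) * s - w) - 4 * (((n - 1) / (100 - 2 * n)) ^ 2 * (1 - s) * s ^ 2)) - 33 * ((n - 1) / (100 - 2 * n) * s - w) ^ 5 := by
  subst hn
  have h1s : (0:ℝ) ≤ 1 - s := by linarith
  have hwlo : ((425/572):ℝ) ≤ w := by nlinarith [hR, mul_pos hs hw, hw, hs]
  have hA : (0:ℝ) < (5089560937500/1331) + (-1466757536400/121)*s + (256159698600/11)*s^2 + 1922809200*s^3 + 480207156*s^4 := by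
    linarith [mul_nonneg (pow_nonneg hs.le 0) (pow_nonneg h1s 4), mul_nonneg (pow_nonneg hs.le 1) (pow_nonneg h1s 3), mul_nonneg (pow_nonneg hs.le 2) (pow_nonneg h1s 2), mul_nonneg (pow_nonneg hs.le 3) (pow_nonneg h1s 1), pow_pos hs 4]
  have hF : (0:ℝ) < (41597373046875/14641) + (-9448899125625/1331)*s + (250457201550/121)*s^2 + (140928315150/11)*s^3 + (-1252896825)*s^4 + (-212399319)*s^5 := by
    linarith [mul_nonneg (pow_nonneg hs.le 0) (pow_nonneg h1s 5), mul_nonneg (pow_nonneg hs.le 1) (pow_nonneg h1s 4), mul_nonneg (pow_nonneg hs.le 2) (pow_nonneg h1s 3), mul_nonneg (pow_nonneg hs.le 3) (pow_nonneg h1s 2), mul_nonneg (pow_nonneg hs.le 4) (pow_nonneg h1s 1), pow_pos hs 5]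
  have hPAB : (380204032:ℝ) * (24 * (100 - 24 - 1) / (24 - 1) * (2 * ((24 - 1) / (100 - 2 * 24) * s * (2 - 3 * s) / 3) * ((24 - 1) / (100 - 2 * 24) * s - w) - 4 * (((24 - 1) / (100 - 2 * 24)) ^ 2 * (1 - s) * s ^ 2)) - 33 * ((24 - 1) / (100 - 2 * 24) * s - w) ^ 5) = ((5089560937500/1331) + (-1466757536400/121)*s + (256159698600/11)*s^2 + 1922809200*s^3 + 480207156*s^4) * w + ((2539023046875/1331)*s + (-1843155719700/121)*s^2 + (125213047650/11)*s^3 + (-1609694100)*s^4 + (-212399319)*s^5) := by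
    linear_combination (((76765625/3993) + (1062500/363)*s + (-28750/11)*s^2 + (-48668/3)*s^3) + ((9392500/363) + (-317200/11)*s + 55016*s^2)*w + ((1149200/33) + (-248768/3)*s)*w^2 + ((140608/3))*w^3) * hR
  have hwloA := mul_le_mul_of_nonneg_left hwlo (le_of_lt hA)
  linarith [hPAB, hF, hwloA]

lemma keyCase25 (n s w : ℝ) (hn : n = 25) (hs : 0 < s) (hs1 : s ≤ 1) (hw : 0 < w)
    (hR : 99 * (100 - 2 * n) ^ 2 * w ^ 2 = ((100 - 2 * n - 1) * (99 - n) + 99 * (n - 1) * s) * (100 - 2 * n) * w + ((n + 1) * (100 - 2 * n) + (n - 1)) * (99 - n) * s) :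
    0 < n * (100 - n - 1) / (n - 1) * (2 * ((n - 1) / (100 - 2 * n) * s * (2 - 3 * s) / 3) * ((n - 1) / (100 - 2 * n) * s - w) - 4 * (((n - 1) / (100 - 2 * n)) ^ 2 * (1 - s) * s ^ 2)) - 33 * ((n - 1) / (100 - 2 * n) * s - w) ^ 5 := by
  subst hn
  have h1s : (0:ℝ) ≤ 1 - s := by linarith
  have hwlo : ((1813/2475):ℝ) ≤ w := by nlinarith [hR, mul_pos hs hw, hw, hs]
  have hA : (0:ℝ) < (270104130174025/970299) + (-3304987950050/3267)*s + (17106522650/9)*s^2 + 186213600*s^3 + 51321600*s^4 := by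
    linarith [mul_nonneg (pow_nonneg hs.le 0) (pow_nonneg h1s 4), mul_nonneg (pow_nonneg hs.le 1) (pow_nonneg h1s 3), mul_nonneg (pow_nonneg hs.le 2) (pow_nonneg h1s 2), mul_nonneg (pow_nonneg hs.le 3) (pow_nonneg h1s 1), pow_pos hs 4]
  have hF : (0:ℝ) < (19587951520220293/96059601) + (-573066701535160/970299)*s + (96834628810/3267)*s^2 + (12679084520/11)*s^3 + (-131708160)*s^4 + (-24634368)*s^5 := by
    linarith [mul_nonneg (pow_nonneg hs.le 0) (pow_nonneg h1s 9), mul_nonneg (pow_nonneg hs.le 1) (pow_nonneg h1s 8), mul_nonneg (pow_nonneg hs.le 2) (pow_nonneg h1s 7), mul_nonneg (pow_nonneg hs.le 3) (pow_nonneg h1s 6), mul_nonneg (pow_nonneg hs.le 4) (pow_nonneg h1s 5), mul_nonneg (pow_nonneg hs.le 5) (pow_nonneg h1s 4), mul_nonneg (pow_nonneg hs.le 6) (pow_nonneg h1s 3), mul_nonneg (pow_nonneg hs.le 7) (pow_nonneg h1s 2), mul_nonneg (pow_nonneg hs.le 8) (pow_nonneg h1s 1), pow_pos hs 9]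
  have hPAB : (29296875:ℝ) * (25 * (100 - 25 - 1) / (25 - 1) * (2 * ((25 - 1) / (100 - 2 * 25) * s * (2 - 3 * s) / 3) * ((25 - 1) / (100 - 2 * 25) * s - w) - 4 * (((25 - 1) / (100 - 2 * 25)) ^ 2 * (1 - s) * s ^ 2)) - 33 * ((25 - 1) / (100 - 2 * 25) * s - w) ^ 5) = ((270104130174025/970299) + (-3304987950050/3267)*s + (17106522650/9)*s^2 + 186213600*s^3 + 51321600*s^4) * w + ((145966476877718/970299)*s + (-13355711361928/9801)*s^2 + (11178616712/11)*s^3 + (-169302528)*s^4 + (-24634368)*s^5) := by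
    linear_combination (((5959274797/3881196) + (2481997/9801)*s + (-2738/11)*s^2 + (-1728)*s^3) + ((82174225/39204) + (-509675/198)*s + 5400*s^2)*w + ((1133125/396) + (-7500)*s)*w^2 + ((15625/4))*w^3) * hR
  have hwloA := mul_le_mul_of_nonneg_left hwlo (le_of_lt hA)
  linarith [hPAB, hF, hwloA]

lemma keyCase26 (n s w : ℝ) (hn : n = 26) (hs : 0 < s) (hs1 : s ≤ 1) (hw : 0 < w)
    (hR : 99 * (100 - 2 * n) ^ 2 * w ^ 2 = ((100 - 2 * n - 1) * (99 - n) + 99 * (n - 1) * s) * (100 - 2 * n) * w + ((n + 1) * (100 - 2 * n) + (n - 1)) * (99 - n) * s) :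
    0 < n * (100 - n - 1) / (n - 1) * (2 * ((n - 1) / (100 - 2 * n) * s * (2 - 3 * s) / 3) * ((n - 1) / (100 - 2 * n) * s - w) - 4 * (((n - 1) / (100 - 2 * n)) ^ 2 * (1 - s) * s ^ 2)) - 33 * ((n - 1) / (100 - 2 * n) * s - w) ^ 5 := by
  subst hn
  have h1s : (0:ℝ) ≤ 1 - s := by linarith
  have h2 : 0 < 99 * 48^2 * w - (47*73 + 99*25*s)*48 := by nlinarith [hR, mul_pos hs hw, hw, hs]
  have hQb : (39204:ℝ)*s^2 - 58692*s ≤ 0 := by nlinarith [mul_nonneg hs.le (sub_nonneg.mpr hs1)]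
  have hwlo : (3431/4752 + 3/4*s : ℝ) ≤ w := by nlinarith [hR, hQb, h2, hs, hw]
  have hA : (0:ℝ) < (2217189712657936/2910897) + (-93331607614400/29403)*s + (577350718496/99)*s^2 + (2035240000/3)*s^3 + 206250000*s^4 := by
    linarith [mul_nonneg (pow_nonneg hs.le 0) (pow_nonneg h1s 5), mul_nonneg (pow_nonneg hs.le 1) (pow_nonneg h1s 4), mul_nonneg (pow_nonneg hs.le 2) (pow_nonneg h1s 3), mul_nonneg (pow_nonneg hs.le 3) (pow_nonneg h1s 2), mul_nonneg (pow_nonneg hs.le 4) (pow_nonneg h1s 1), pow_pos hs 5]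
  have hF : (0:ℝ) < (475448619008086151/864536409) + (-11130295804304441/8732691)*s + (-242979604767274/88209)*s^2 + (7373534106398/891)*s^3 + (-107538125/9)*s^4 + 47265625*s^5 := by
    linarith [mul_nonneg (pow_nonneg hs.le 0) (pow_nonneg h1s 14), mul_nonneg (pow_nonneg hs.le 1) (pow_nonneg h1s 13), mul_nonneg (pow_nonneg hs.le 2) (pow_nonneg h1s 12), mul_nonneg (pow_nonneg hs.le 3) (pow_nonneg h1s 11), mul_nonneg (pow_nonneg hs.le 4) (pow_nonneg h1s 10), mul_nonneg (pow_nonneg hs.le 5) (pow_nonneg h1s 9), mul_nonneg (pow_nonneg hs.le 6) (pow_nonneg h1s 8), mul_nonneg (pow_nonneg hs.le 7) (pow_nonneg h1s 7), mul_nonneg (pow_nonneg hs.le 8) (pow_nonneg h1s 6), mul_nonneg (pow_nonneg hs.le 9) (pow_nonneg h1s 5), mul_nonneg (pow_nonneg hs.le 10) (pow_nonneg h1s 4), mul_nonneg (pow_nonneg hs.le 11) (pow_nonneg h1s 3), mul_nonneg (pow_nonneg hs.le 12) (pow_nonneg h1s 2), mul_nonneg (pow_nonneg hs.le 13) (pow_nonneg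 h1s 1), pow_pos hs 14]
  have hPAB : (84934656:ℝ) * (26 * (100 - 26 - 1) / (26 - 1) * (2 * ((26 - 1) / (100 - 2 * 26) * s * (2 - 3 * s) / 3) * ((26 - 1) / (100 - 2 * 26) * s - w) - 4 * (((26 - 1) / (100 - 2 * 26)) ^ 2 * (1 - s) * s ^ 2)) - 33 * ((26 - 1) / (100 - 2 * 26) * s - w) ^ 5) = ((2217189712657936/2910897) + (-93331607614400/29403)*s + (577350718496/99)*s^2 + (2035240000/3)*s^3 + 206250000*s^4) * w + ((3894823950028103/8732691)*s + (-404400421727332/88209)*s^2 + (1013328326350/297)*s^3 + (-6027062500/9)*s^4 + (-107421875)*s^5) := by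
    linear_combination (((40388911991/8732691) + (73135196/88209)*s + (-266450/297)*s^2 + (-62500/9)*s^3) + ((188348176/29403) + (-2574272/297)*s + 20000*s^2)*w + ((878336/99) + (-25600)*s)*w^2 + (12288)*w^3) * hR
  have hwloA := mul_le_mul_of_nonneg_left hwlo (le_of_lt hA)
  linarith [hPAB, hF, hwloA]

lemma keyCase27 (n s w : ℝ) (hn : n = 27) (hs9 : s = 9/25) (hw : 0 < w)
    (hR : 99 * (100 - 2 * n) ^ 2 * w ^ 2 = ((100 - 2 * n - 1) * (99 - n) + 99 * (n - 1) * s) * (100 - 2 * n) * w + ((n + 1) * (100 - 2 * n) + (n - 1)) * (99 - n) * s) :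
    n * (100 - n - 1) / (n - 1) * (2 * ((n - 1) / (100 - 2 * n) * s * (2 - 3 * s) / 3) * ((n - 1) / (100 - 2 * n) * s - w) - 4 * (((n - 1) / (100 - 2 * n)) ^ 2 * (1 - s) * s ^ 2)) - 33 * ((n - 1) / (100 - 2 * n) * s - w) ^ 5 < 0 := by
  subst hn; subst hs9
  have h2 : 0 < 99 * 46^2 * w - (45*72 + 99*26*(9/25))*46 := by nlinarith [hR, hw]
  have hwhi : w ≤ (27/25:ℝ) := by nlinarith [hR, h2, hw]
  have hPAB : (6436343:ℝ) * (27 * (100 - 27 - 1) / (27 - 1) * (2 * ((27 - 1) / (100 - 2 * 27) * (9/25) * (2 - 3 * (9/25)) / 3) * ((27 - 1) / (100 - 2 * 27) * (9/25) - w) - 4 * (((27 - 1) / (100 - 2 * 27)) ^ 2 * (1 - (9/25)) * (9/25) ^ 2)) - 33 * ((27 - 1) / (100 - 2 * 27) * (9/25) - w) ^ 5) = ((12834815306467509/519921875)) * w + ((-352103779461532311/12998046875)) := by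
    linear_combination (((7188424299/20796875)) + ((74052387/151250))*w + ((-28566/275))*w^2 + ((12167/12))*w^3) * hR
  nlinarith [hPAB, hwhi]


/-- For `N = 100`: no cascade is possible when `n ≤ 26`, while a cascade is
possible when `n = 27`. -/
theorem stmt_17 :
    (∀ n : ℤ, 2 ≤ n → n ≤ 26 → ∀ y : ℝ, 0 ≤ y → lam3 (100 : ℝ) (n : ℝ) y < 0) ∧
    (∃ y : ℝ, 0 < y ∧ 0 < lam3 (100 : ℝ) (27 : ℝ) y) := by
  constructor
  · intro n hn2 hn26 y hy
    have hn2' : (2:ℝ) ≤ (n:ℝ) := by exact_mod_cast hn2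
    have hn27' : (n:ℝ) ≤ 27 := by
      have : (n:ℝ) ≤ 26 := by exact_mod_cast hn26
      linarith
    obtain ⟨s, w, hseq, hs, hs1, hw, hR, hceq, haeq, hbeq⟩ := bridge (n:ℝ) y hn2' hn27' hy
    have hcneg : ((n:ℝ)-1)/(100 - 2*(n:ℝ)) * s - w < 0 := cneg _ s w hn2' hn27' hs hs1 hw hR
    have hkey : 0 < (n:ℝ) * (100 - (n:ℝ) - 1) / ((n:ℝ) - 1) * (2 * (((n:ℝ) - 1) / (100 - 2 * (n:ℝ)) * s * (2 - 3 * s) / 3) * (((n:ℝ) - 1) / (100 - 2 * (n:ℝ)) * s - w) - 4 * ((((n:ℝ) - 1) / (100 - 2 * (n:ℝ))) ^ 2 * (1 - s) * s ^ 2)) - 33 * (((n:ℝ) - 1) / (100 - 2 * (n:ℝ)) * s - w) ^ 5 := by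
      interval_cases n
      · exact keyCase2 _ s w (by norm_num) hs hs1 hw hR
      · exact keyCase3 _ s w (by norm_num) hs hs1 hw hR
      · exact keyCase4 _ s w (by norm_num) hs hs1 hw hR
      · exact keyCase5 _ s w (by norm_num) hs hs1 hw hR
      · exact keyCase6 _ s w (by norm_num) hs hs1 hw hR
      · exact keyCase7 _ s w (by norm_num) hs hs1 hw hR
      · exact keyCase8 _ s w (by norm_num) hs hs1 hw hR
      · exact keyCase9 _ s w (by norm_num) hs hs1 hw hR
      · exact keyCase10 _ s w (by norm_num) hs hs1 hw hR
      · exact keyCase11 _ s w (by norm_num) hs hs1 hw hR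
      · exact keyCase12 _ s w (by norm_num) hs hs1 hw hR
      · exact keyCase13 _ s w (by norm_num) hs hs1 hw hR
      · exact keyCase14 _ s w (by norm_num) hs hs1 hw hR
      · exact keyCase15 _ s w (by norm_num) hs hs1 hw hR
      · exact keyCase16 _ s w (by norm_num) hs hs1 hw hR
      · exact keyCase17 _ s w (by norm_num) hs hs1 hw hR
      · exact keyCase18 _ s w (by norm_num) hs hs1 hw hR
      · exact keyCase19 _ s w (by norm_num) hs hs1 hw hR
      · exact keyCase20 _ s w (by norm_num) hs hs1 hw hR
      · exact keyCase21 _ s w (by norm_num) hs hs1 hw hR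
      · exact keyCase22 _ s w (by norm_num) hs hs1 hw hR
      · exact keyCase23 _ s w (by norm_num) hs hs1 hw hR
      · exact keyCase24 _ s w (by norm_num) hs hs1 hw hR
      · exact keyCase25 _ s w (by norm_num) hs hs1 hw hR
      · exact keyCase26 _ s w (by norm_num) hs hs1 hw hR
    have hc5 : (cFun 100 (n:ℝ) y)^5 < 0 := by
      rw [hceq]; exact Odd.pow_neg ⟨2, by norm_num⟩ hcneg
    simp only [lam3]
    have hX : (n:ℝ) * (100 - (n:ℝ) - 1) / ((n:ℝ) - 1) * (2 * aFun 100 (n:ℝ) y * cFun 100 (n:ℝ) y - 4 * bFun 100 (n:ℝ) y ^ 2) / cFun 100 (n:ℝ) y ^ 5 < 33 := by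
      rw [div_lt_iff_of_neg hc5, hceq, haeq, hbeq]
      linarith [hkey]
    linarith [hX]
  · refine ⟨Real.log 3, Real.log_pos (by norm_num), ?_⟩
    have hy : (0:ℝ) ≤ Real.log 3 := (Real.log_pos (by norm_num)).le
    obtain ⟨s, w, hseq, hs, hs1, hw, hR, hceq, haeq, hbeq⟩ :=
      bridge (27:ℝ) (Real.log 3) (by norm_num) (by norm_num) hy
    have hs9 : s = 9/25 := by rw [hseq, tanh_log_three]; norm_num
    have hcneg : ((27:ℝ)-1)/(100 - 2*(27:ℝ)) * s - w < 0 :=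
      cneg _ s w (by norm_num) (by norm_num) hs hs1 hw hR
    have hkey := keyCase27 (27:ℝ) s w rfl hs9 hw hR
    have hc5 : (cFun 100 (27:ℝ) (Real.log 3))^5 < 0 := by
      rw [hceq]; exact Odd.pow_neg ⟨2, by norm_num⟩ hcneg
    simp only [lam3]
    have hX : (33:ℝ) < (27:ℝ) * (100 - (27:ℝ) - 1) / ((27:ℝ) - 1) * (2 * aFun 100 (27:ℝ) (Real.log 3) * cFun 100 (27:ℝ) (Real.log 3) - 4 * bFun 100 (27:ℝ) (Real.log 3) ^ 2) / cFun 100 (27:ℝ) (Real.log 3) ^ 5 := by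
      rw [lt_div_iff_of_neg hc5, hceq, haeq, hbeq]
      linarith [hkey]
    linarith [hX]
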